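/- arXiv:1909.03257 — 8 statements merged into one kernel-verified Lean document; each statement's English description precedes it below -/
import Mathlib

section
/- Let s ≥ 2 and let (H_n)_{n≥1} be the intertwining sequence of s sequences (η^{(j)}_i)_{i≥0} ⊂ ℂ (j = 1,…,s) of pairwise distinct elements. If N = binom(d+s, s) for some d ≥ 0, then k(N) = (d,0,…,0) and for every z = (z_1,…,z_s) ∈ ℂ^s one has VDM(H_1,…,H_N,z) = [∏_{i=0}^{d} (z_s − η^{(s)}_i)] · VDM(H_1,…,H_N). -/
open Finset

/-- Graded lexicographic strict order on `ℕ^s`: first compare total degrees,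
then compare lexicographically. -/
def GradedLexLt {s : ℕ} (k l : Fin s → ℕ) : Prop :=
  (∑ i, k i) < (∑ i, l i) ∨
    ((∑ i, k i) = (∑ i, l i) ∧ ∃ t : Fin s, (∀ u, u < t → k u = l u) ∧ k t < l t)

/-- Generalized Vandermonde determinant `det [e_i(G_j)]` where the monomials `e_i`
are given by the enumeration `kEnum` of `ℕ^s`. -/
noncomputable def VDM {s : ℕ} (kEnum : ℕ → Fin s → ℕ) {N : ℕ}
    (G : Fin N → Fin s → ℂ) : ℂ :=
  Matrix.det (Matrix.of fun i j : Fin N => ∏ t, G j t ^ kEnum (i : ℕ) t)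

lemma gll_sum_le {s : ℕ} {k l : Fin s → ℕ} (h : GradedLexLt k l) :
    ∑ i, k i ≤ ∑ i, l i := by
  rcases h with h | ⟨h, _⟩ <;> omega

lemma gll_asymm {s : ℕ} {k l : Fin s → ℕ} (h1 : GradedLexLt k l) (h2 : GradedLexLt l k) :
    False := by
  rcases h1 with h1 | ⟨hs1, t1, hp1, hl1⟩ <;> rcases h2 with h2 | ⟨hs2, t2, hp2, hl2⟩ <;>
    try omega
  rcases lt_trichotomy t1 t2 with h | h | h
  · have := hp2 t1 h; omega
  · subst h; omega
  · have := hp1 t2 h; omega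

lemma det_updateRow_add_sum' {n : ℕ} (M : Matrix (Fin n) (Fin n) ℂ) (p : Fin n)
    (F : Finset ℕ) (c : ℕ → ℂ) (f : ℕ → Fin n) (hf : ∀ i ∈ F, f i ≠ p) :
    (M.updateRow p (M p + ∑ i ∈ F, c i • M (f i))).det = M.det := by
  classical
  induction F using Finset.induction_on with
  | empty => simp
  | @insert a F ha ih =>
    rw [Finset.sum_insert ha, add_comm (c a • M (f a)), ← add_assoc,
      Matrix.det_updateRow_add, Matrix.det_updateRow_smul,
      Matrix.det_updateRow_eq_zero (hf a (Finset.mem_insert_self a F)), mul_zero, add_zero,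
      ih (fun i hi => hf i (Finset.mem_insert_of_mem hi))]

lemma card_deg_le (s d : ℕ) (hs : 1 ≤ s) :
    ((range (d+1)).biUnion fun m => Finset.Nat.antidiagonalTuple s m).card
      = (d+s).choose s := by
  rw [Finset.card_biUnion]
  · have hterm : ∀ m, (Finset.Nat.antidiagonalTuple s m).card = (s - 1 + m).choose (s-1) := by
      intro m
      have h1 : (Finset.Nat.antidiagonalTuple s m).card
          = Nat.card {x // x ∈ Finset.Nat.antidiagonalTuple s m} :=
        (Nat.card_eq_finsetCard _).symm
      rw [h1, Nat.card_congr
        ((Equiv.subtypeEquivRight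
            (fun x => by simp [Finset.Nat.mem_antidiagonalTuple])).trans
          (Sym.equivNatSumOfFintype (Fin s) m).symm)]
      rw [Nat.card_eq_fintype_card, Sym.card_sym_eq_choose, Fintype.card_fin]
      have h2 : (s - 1 + m).choose (s-1) = (s-1+m).choose m := by
        rw [← Nat.choose_symm (show m ≤ s-1+m by omega)]
        congr 1
        omega
      rw [h2, show s + m - 1 = s - 1 + m by omega]
    rw [Finset.sum_congr rfl (fun m _ => hterm m)]
    have hhs := Nat.sum_Icc_choose (s-1+d) (s-1)
    rw [show s-1+d+1 = d+s by omega, show s-1+1 = s by omega] at hhs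
    rw [← hhs, ← Finset.Ico_add_one_right_eq_Icc, Finset.sum_Ico_eq_sum_range]
    apply Finset.sum_congr
    · congr 1; omega
    · intro m _; congr 1
  · intro x hx y hy hxy
    apply Finset.disjoint_left.mpr
    intro k hk1 hk2
    rw [Finset.Nat.mem_antidiagonalTuple] at hk1 hk2
    exact hxy (by omega)

/-- if `N = binom(d+s, s)` then `k(N) = (d,0,…,0)` and
`VDM(H_1,…,H_N,z) = ∏_{i=0}^{d} (z_s − η^{(s)}_i) ⋅ VDM(H_1,…,H_N)`.
Here `kEnum n` stands for the paper's `k(n+1)` and `H n` for `H_{n+1}`. -/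
theorem statement0 {s : ℕ} (hs : 2 ≤ s)
    (kEnum : ℕ → Fin s → ℕ) (hbij : Function.Bijective kEnum)
    (hmono : ∀ a b : ℕ, a < b → GradedLexLt (kEnum a) (kEnum b))
    (η : Fin s → ℕ → ℂ) (hdist : ∀ j, Function.Injective (η j))
    (H : ℕ → Fin s → ℂ) (hH : ∀ n j, H n j = η j (kEnum n j))
    (d N : ℕ) (hN : N = Nat.choose (d + s) s) :
    kEnum (N - 1) = (fun j : Fin s => if j = ⟨0, by omega⟩ then d else 0) ∧
    ∀ z : Fin s → ℂ,
      VDM kEnum (Fin.snoc (fun i : Fin N => H i) z) =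
        (∏ i ∈ range (d + 1), (z ⟨s - 1, by omega⟩ - η ⟨s - 1, by omega⟩ i)) *
          VDM kEnum (fun i : Fin N => H i) := by
  classical
  obtain ⟨g, hg1, hg2⟩ : ∃ g : (Fin s → ℕ) → ℕ,
      (∀ n, g (kEnum n) = n) ∧ (∀ k, kEnum (g k) = k) :=
    ⟨(Equiv.ofBijective kEnum hbij).symm, (Equiv.ofBijective kEnum hbij).left_inv,
      (Equiv.ofBijective kEnum hbij).right_inv⟩
  -- the key fact : index n has degree ≤ d iff n < N
  have key : ∀ n : ℕ, (∑ i, kEnum n i ≤ d) ↔ n < N := by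
    set Sd := (range (d+1)).biUnion fun m => Finset.Nat.antidiagonalTuple s m with hSd
    have hmemSd : ∀ k : Fin s → ℕ, k ∈ Sd ↔ ∑ i, k i ≤ d := by
      intro k
      rw [hSd, Finset.mem_biUnion]
      constructor
      · rintro ⟨m, hm, hk⟩
        rw [Finset.Nat.mem_antidiagonalTuple] at hk
        rw [Finset.mem_range] at hm
        omega
      · intro h
        exact ⟨∑ i, k i, Finset.mem_range.mpr (by omega),
          Finset.Nat.mem_antidiagonalTuple.mpr rfl⟩
    have hginj : Function.Injective g := fun a b hab => by
      rw [← hg2 a, ← hg2 b, hab]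
    set A := Sd.image g with hA
    have hmemA : ∀ n, n ∈ A ↔ ∑ i, kEnum n i ≤ d := by
      intro n
      rw [hA, Finset.mem_image]
      constructor
      · rintro ⟨k, hk, rfl⟩
        rw [← hmemSd]
        rwa [hg2 k]
      · intro h
        exact ⟨kEnum n, (hmemSd _).2 h, hg1 n⟩
    have hcardA : A.card = N := by
      rw [hA, Finset.card_image_of_injective _ hginj, hSd, card_deg_le s d (by omega), hN]
    have hclosed : ∀ a b : ℕ, a < b → b ∈ A → a ∈ A := by
      intro a b hab hb
      rw [hmemA] at hb ⊢
      exact le_trans (gll_sum_le (hmono a b hab)) hb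
    have hrange : A = range N := by
      refine (Finset.eq_of_subset_of_card_le ?_ (by rw [hcardA, Finset.card_range])).symm
      intro n hn
      rw [Finset.mem_range] at hn
      by_contra hnA
      have hsub : A ⊆ range n := by
        intro m hm
        rw [Finset.mem_range]
        by_contra hmn
        push_neg at hmn
        rcases eq_or_lt_of_le hmn with rfl | h
        · exact hnA hm
        · exact hnA (hclosed n m h hm)
      have := Finset.card_le_card hsub
      rw [hcardA, Finset.card_range] at this
      omega
    intro n
    rw [← hmemA, hrange, Finset.mem_range]
  have hNpos : 0 < N := by
    rw [hN]; exact Nat.choose_pos (by omega)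
  -- Part 1
  set δ : Fin s → ℕ := fun j : Fin s => if j = (⟨0, by omega⟩ : Fin s) then d else 0 with hδ
  have hδsum : ∑ i, δ i = d := by
    rw [hδ]
    simp
  have hmax : ∀ k : Fin s → ℕ, ∑ i, k i ≤ d → k ≠ δ → GradedLexLt k δ := by
    intro k hk hne
    rcases lt_or_eq_of_le hk with h | h
    · exact Or.inl (by rw [hδsum]; exact h)
    · refine Or.inr ⟨h.trans hδsum.symm, ⟨0, by omega⟩, fun u hu => absurd (Fin.lt_def.mp hu) (Nat.not_lt_zero _), ?_⟩
      have hle : k ⟨0, by omega⟩ ≤ d :=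
        h ▸ Finset.single_le_sum (f := k) (fun i _ => Nat.zero_le _) (Finset.mem_univ _)
      rcases lt_or_eq_of_le hle with h2 | h2
      · simpa [hδ] using h2
      · exfalso
        apply hne
        funext j
        by_cases hj : j = (⟨0, by omega⟩ : Fin s)
        · rw [hj]; simp [hδ, h2]
        · have hadd := Finset.add_sum_erase univ k (Finset.mem_univ (⟨0, by omega⟩ : Fin s))
          have h0 : ∑ j ∈ univ.erase (⟨0, by omega⟩ : Fin s), k j = 0 := by omega
          have hkj := Finset.sum_eq_zero_iff.mp h0 j
            (Finset.mem_erase.mpr ⟨hj, Finset.mem_univ j⟩)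
          simp [hδ, hj, hkj]
  have hgδ : g δ < N := (key (g δ)).mp (by rw [hg2 δ]; exact hδsum.le)
  have hpart1 : kEnum (N-1) = δ := by
    by_contra hne
    have hlt : g δ < N - 1 := by
      rcases Nat.lt_or_ge (g δ) (N-1) with h | h
      · exact h
      · exfalso
        apply hne
        have hEq : g δ = N - 1 := by omega
        rw [← hEq, hg2]
    have hA1 := hmono _ _ hlt
    rw [hg2] at hA1
    have hB1 : GradedLexLt (kEnum (N-1)) δ :=
      hmax _ ((key (N-1)).mpr (by omega)) hne
    exact gll_asymm hB1 hA1
  refine ⟨hpart1, ?_⟩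
  -- Part 2
  set sl : Fin s := ⟨s-1, by omega⟩ with hsl
  have hslv : (sl : ℕ) = s - 1 := rfl
  have hminε : kEnum N = fun j => if j = sl then d + 1 else 0 := by
    set ε : Fin s → ℕ := fun j => if j = sl then d+1 else 0 with hε
    have hεsum : ∑ i, ε i = d + 1 := by rw [hε]; simp
    have hgε : N ≤ g ε := by
      by_contra h
      push_neg at h
      have hle := (key (g ε)).mpr h
      rw [hg2] at hle
      omega
    rcases eq_or_lt_of_le hgε with h | h
    · rw [h, hg2]
    · exfalso
      have hA1 := hmono N (g ε) h
      rw [hg2] at hA1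
      set k := kEnum N with hk
      have hksum : d + 1 ≤ ∑ i, k i := by
        have hnot : ¬ (∑ i, k i ≤ d) := fun hh => absurd ((key N).mp hh) (lt_irrefl N)
        omega
      have hkne : k ≠ ε := by
        intro hh
        have := congrArg g hh
        rw [hk, hg1] at this
        omega
      have hB1 : GradedLexLt ε k := by
        rcases lt_or_eq_of_le hksum with h2 | h2
        · exact Or.inl (by rw [hεsum]; exact h2)
        · refine Or.inr ⟨by rw [hεsum, ← h2], ?_⟩
          by_cases hall : ∀ u : Fin s, u < sl → k u = 0
          · exfalso
            apply hkne
            funext j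
            by_cases hj : j = sl
            · rw [hj]
              have h0 : ∑ u ∈ univ.erase sl, k u = 0 := by
                apply Finset.sum_eq_zero
                intro u hu
                rw [Finset.mem_erase] at hu
                apply hall u
                rw [Fin.lt_def]
                have h3 : (u : ℕ) < s := u.isLt
                have h4 : (u : ℕ) ≠ s - 1 := fun hc => hu.1 (Fin.ext (by omega))
                omega
              have hadd := Finset.add_sum_erase univ k (Finset.mem_univ sl)
              have h7 : k sl = d + 1 := by omega
              have h8 : ε sl = d + 1 := by simp [hε]
              omega
            · have hjlt : j < sl := by
                rw [Fin.lt_def]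
                have h3 : (j : ℕ) < s := j.isLt
                have h4 : (j : ℕ) ≠ s - 1 := fun hc => hj (Fin.ext (by omega))
                omega
              simp [hε, hj, hall j hjlt]
          · push_neg at hall
            set F := univ.filter (fun u : Fin s => u < sl ∧ k u ≠ 0) with hF
            have hFne : F.Nonempty := by
              obtain ⟨u, hu1, hu2⟩ := hall
              exact ⟨u, by simp [hF, hu1, hu2]⟩
            set t := F.min' hFne with ht
            obtain ⟨-, htlt, htne⟩ := Finset.mem_filter.mp (F.min'_mem hFne)
            refine ⟨t, fun u hu => ?_, ?_⟩
            · have husl : u < sl := lt_trans hu htlt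
              have hu0 : k u = 0 := by
                by_contra h0
                have hmem : u ∈ F := by simp [hF, husl, h0]
                exact absurd hu (not_lt.mpr (F.min'_le u hmem))
              simp [hε, ne_of_lt husl, hu0]
            · have h5 : ε t = 0 := by simp [hε]; exact ne_of_lt htlt
              rw [h5]
              exact Nat.pos_of_ne_zero htne
      exact gll_asymm hA1 hB1
  intro z
  set G : Fin (N+1) → Fin s → ℂ := Fin.snoc (fun i : Fin N => H i) z with hG
  set M : Matrix (Fin (N+1)) (Fin (N+1)) ℂ :=
    Matrix.of (fun i j : Fin (N+1) => ∏ t, G j t ^ kEnum (i : ℕ) t) with hM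
  have hVDM1 : VDM kEnum G = M.det := rfl
  set P : Polynomial ℂ := ∏ i ∈ range (d+1), (Polynomial.X - Polynomial.C (η sl i)) with hP
  have hPm : P.Monic := Polynomial.monic_prod_of_monic _ _ (fun i _ => Polynomial.monic_X_sub_C _)
  have hPdeg : P.natDegree = d+1 := by
    rw [hP, Polynomial.natDegree_prod _ _ (fun i _ => Polynomial.X_sub_C_ne_zero _)]
    simp
  have hPeval : ∀ x : ℂ, ∏ i ∈ range (d+1), (x - η sl i)
      = x^(d+1) + ∑ m ∈ range (d+1), P.coeff m * x^m := by
    intro x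
    have h1 : P.eval x = ∏ i ∈ range (d+1), (x - η sl i) := by
      rw [hP]; simp [Polynomial.eval_prod]
    have h2 : P.eval x = ∑ m ∈ range (d+2), P.coeff m * x^m := by
      have h3 := Polynomial.eval_eq_sum_range (x := x) (p := P)
      rwa [hPdeg] at h3
    have hc : P.coeff (d+1) = 1 := by
      rw [← hPdeg]; exact hPm.coeff_natDegree
    rw [← h1, h2, Finset.sum_range_succ, hc]
    ring
  have hidx : ∀ m, m ≤ d → g (fun j => if j = sl then m else 0) < N := by
    intro m hm
    apply (key _).mp
    rw [hg2]
    simp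
    omega
  have hrowval : ∀ (i : Fin (N+1)) (m : ℕ),
      kEnum (i : ℕ) = (fun j => if j = sl then m else 0) → ∀ j, M i j = G j sl ^ m := by
    intro i m hi j
    rw [hM]
    show ∏ t, G j t ^ kEnum (i : ℕ) t = G j sl ^ m
    rw [hi]
    rw [Finset.prod_eq_single sl (fun t _ ht => by simp [ht])
      (fun h => absurd (Finset.mem_univ sl) h)]
    simp
  set fIdx : ℕ → Fin (N+1) := fun m =>
    if hm : m ≤ d then ⟨g (fun j => if j = sl then m else 0), by have := hidx m hm; omega⟩
    else Fin.last N with hfIdx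
  set r : Fin (N+1) → ℂ := fun j => ∏ i ∈ range (d+1), (G j sl - η sl i) with hr
  have hrcomb : r = M (Fin.last N) + ∑ m ∈ range (d+1), P.coeff m • M (fIdx m) := by
    funext j
    have hlast : M (Fin.last N) j = G j sl ^ (d+1) := by
      apply hrowval
      rw [Fin.val_last]
      exact hminε
    have hmid : ∀ m ∈ range (d+1), M (fIdx m) j = G j sl ^ m := by
      intro m hmr
      rw [Finset.mem_range] at hmr
      have hmd : m ≤ d := by omega
      apply hrowval
      rw [hfIdx]
      simp only [dif_pos hmd]
      exact hg2 _
    simp only [Pi.add_apply, Finset.sum_apply, Pi.smul_apply, smul_eq_mul]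
    rw [hlast, hr]
    show ∏ i ∈ range (d+1), (G j sl - η sl i) = _
    rw [hPeval (G j sl)]
    congr 1
    apply Finset.sum_congr rfl
    intro m hmr
    rw [hmid m hmr]
  have hfne : ∀ m ∈ range (d+1), fIdx m ≠ Fin.last N := by
    intro m hmr
    rw [Finset.mem_range] at hmr
    rw [hfIdx]
    simp only [dif_pos (show m ≤ d by omega)]
    intro hcon
    have h6 := congrArg Fin.val hcon
    rw [Fin.val_last] at h6
    have := hidx m (by omega)
    simp at h6
    omega
  have hdet1 : M.det = (M.updateRow (Fin.last N) r).det := by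
    rw [hrcomb]
    exact (det_updateRow_add_sum' M (Fin.last N) (range (d+1)) (fun m => P.coeff m) fIdx hfne).symm
  have hzero : ∀ j' : Fin N, r (Fin.castSucc j') = 0 := by
    intro j'
    have hGj : G (Fin.castSucc j') = H (j' : ℕ) := by
      rw [hG]; exact Fin.snoc_castSucc _ _ _
    show ∏ i ∈ range (d+1), (G (Fin.castSucc j') sl - η sl i) = 0
    apply Finset.prod_eq_zero (i := kEnum (j' : ℕ) sl)
    · rw [Finset.mem_range]
      have h1 : ∑ t, kEnum (j' : ℕ) t ≤ d := (key _).mpr j'.isLt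
      have h2 : kEnum (j' : ℕ) sl ≤ ∑ t, kEnum (j' : ℕ) t :=
        Finset.single_le_sum (fun t _ => Nat.zero_le _) (Finset.mem_univ sl)
      omega
    · rw [hGj, hH]
      ring
  have hfinal : (M.updateRow (Fin.last N) r).det
      = r (Fin.last N) * (Matrix.of fun i j : Fin N => ∏ t, H (j : ℕ) t ^ kEnum (i : ℕ) t).det := by
    rw [Matrix.det_succ_row _ (Fin.last N)]
    rw [Finset.sum_eq_single (Fin.last N)]
    · rw [Matrix.updateRow_self]
      have hsub : ((M.updateRow (Fin.last N) r).submatrix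
          (Fin.last N).succAbove (Fin.last N).succAbove)
          = Matrix.of fun i j : Fin N => ∏ t, H (j : ℕ) t ^ kEnum (i : ℕ) t := by
        ext i j
        simp only [Matrix.submatrix_apply, Fin.succAbove_last]
        rw [Matrix.updateRow_ne (Fin.castSucc_lt_last i).ne]
        show ∏ t, G (Fin.castSucc j) t ^ kEnum ((Fin.castSucc i : Fin (N+1)) : ℕ) t = _
        rw [show G (Fin.castSucc j) = H (j : ℕ) from by rw [hG]; exact Fin.snoc_castSucc _ _ _,
          Fin.coe_castSucc]
        rfl
      rw [hsub]
      have hsign : ((-1 : ℂ)) ^ (((Fin.last N : Fin (N+1)) : ℕ) + ((Fin.last N : Fin (N+1)) : ℕ)) = 1 := by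
        rw [Fin.val_last, show N + N = 2*N by ring, pow_mul]
        norm_num
      rw [hsign, one_mul]
    · intro j _ hj
      rw [Matrix.updateRow_self]
      obtain ⟨j', rfl⟩ := Fin.exists_castSucc_eq.mpr hj
      rw [hzero j']
      ring
    · intro h
      exact absurd (Finset.mem_univ _) h
  have hrlast : r (Fin.last N) = ∏ i ∈ range (d+1), (z sl - η sl i) := by
    show ∏ i ∈ range (d+1), (G (Fin.last N) sl - η sl i) = _
    rw [show G (Fin.last N) = z from by rw [hG]; exact Fin.snoc_last _ _]
  rw [hVDM1, hdet1, hfinal, hrlast]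
  rfl
end

section
/- For j = 1,…,s, let K_j ⊂ ℂ be a compact set and (η^{(j)}_i)_{i≥0} ⊂ K_j any sequence of pairwise distinct elements with η^{(j)}_0 ∈ ∂K_j, and let (H_n)_{n≥1} be their intertwining sequence. Then the following are equivalent: (i) (H_n)_{n≥1} is a Leja sequence for K_1 × ⋯ × K_s; (ii) for every j = 1,…,s, (η^{(j)}_i)_{i≥0} is a Leja sequence for K_j. -/
open Finset

/-- A (multidimensional) Leja sequence for a compact set `K ⊂ ℂ^s`: the sequence lies
in `K`, starts on the boundary, and each new point maximizes the modulus of the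
generalized Vandermonde determinant over `K`.  `G n` stands for the paper's `H_{n+1}`. -/
def IsLejaSeqMulti {s : ℕ} (kEnum : ℕ → Fin s → ℕ) (K : Set (Fin s → ℂ))
    (G : ℕ → Fin s → ℂ) : Prop :=
  (∀ n, G n ∈ K) ∧ G 0 ∈ frontier K ∧
    ∀ N : ℕ, 1 ≤ N →
      IsGreatest
        ((fun z => ‖VDM kEnum (Fin.snoc (fun i : Fin N => G i) z)‖) '' K)
        ‖VDM kEnum (Fin.snoc (fun i : Fin N => G i) (G N))‖

/-- A one-dimensional Leja sequence for a compact set `K ⊂ ℂ`. -/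
def IsLejaSeq1 (K : Set ℂ) (η : ℕ → ℂ) : Prop :=
  (∀ n, η n ∈ K) ∧ η 0 ∈ frontier K ∧
    ∀ k : ℕ, 1 ≤ k →
      IsGreatest ((fun z => ∏ i ∈ range k, ‖z - η i‖) '' K)
        (∏ i ∈ range k, ‖η k - η i‖)

namespace Statement4Aux

lemma glt_irrefl {s : ℕ} (k : Fin s → ℕ) : ¬ GradedLexLt k k := by
  rintro (h | ⟨-, t, -, h⟩) <;> exact lt_irrefl _ h

lemma glt_asymm {s : ℕ} {a b : Fin s → ℕ} (h1 : GradedLexLt a b) (h2 : GradedLexLt b a) :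
    False := by
  rcases h1 with h1 | ⟨he1, t1, hb1, hl1⟩
  · rcases h2 with h2 | ⟨he2, -⟩
    · exact absurd (h1.trans h2) (lt_irrefl _)
    · exact absurd h1 (he2.symm ▸ lt_irrefl _)
  · rcases h2 with h2 | ⟨he2, t2, hb2, hl2⟩
    · exact absurd h2 (he1 ▸ lt_irrefl _)
    · rcases lt_trichotomy t1 t2 with ht | rfl | ht
      · exact absurd (hb2 t1 ht).symm (ne_of_lt hl1)
      · exact absurd (hl1.trans hl2) (lt_irrefl _)
      · exact (ne_of_lt hl2) (hb1 t2 ht).symm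

lemma glt_of_le_of_ne {s : ℕ} {a b : Fin s → ℕ} (hle : ∀ j, a j ≤ b j) (hne : a ≠ b) :
    GradedLexLt a b := by
  left
  refine Finset.sum_lt_sum (fun i _ => hle i) ?_
  by_contra hc
  push_neg at hc
  exact hne (funext fun j => le_antisymm (hle j) (hc j (Finset.mem_univ j)))

section

variable {s : ℕ} (kEnum : ℕ → Fin s → ℕ)
variable (hbij : Function.Bijective kEnum)
variable (hmono : ∀ a b : ℕ, a < b → GradedLexLt (kEnum a) (kEnum b))

include hmono in
lemma lt_of_glt {m n : ℕ} (h : GradedLexLt (kEnum m) (kEnum n)) : m < n := by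
  rcases lt_trichotomy m n with h' | rfl | h'
  · exact h'
  · exact absurd h (glt_irrefl _)
  · exact absurd (hmono _ _ h') (fun hh => glt_asymm h hh)

include hbij hmono in
lemma kEnum_zero : kEnum 0 = fun _ => 0 := by
  obtain ⟨m, hm⟩ := hbij.2 (fun _ => 0)
  rcases Nat.eq_zero_or_pos m with rfl | hm'
  · exact hm
  · exfalso
    have h := hmono 0 m hm'
    rw [hm] at h
    rcases h with h | ⟨-, t, -, h⟩
    · simpa using h
    · simpa using h

include hbij hmono in
lemma mem_image_of_le_ne {N : ℕ} {β : Fin s → ℕ} (hle : ∀ j, β j ≤ kEnum N j)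
    (hne : β ≠ kEnum N) : ∃ m, m < N ∧ kEnum m = β := by
  obtain ⟨m, hm⟩ := hbij.2 β
  refine ⟨m, ?_, hm⟩
  exact lt_of_glt kEnum hmono (by rw [hm]; exact glt_of_le_of_ne hle hne)

include hmono in
lemma exists_lt_coord {N n : ℕ} (hn : n < N) : ∃ j, kEnum n j < kEnum N j := by
  by_contra hc
  push_neg at hc
  have h := hmono n N hn
  rcases h with h | ⟨he, t, -, hlt⟩
  · exact absurd h (not_lt.2 (Finset.sum_le_sum fun i _ => hc i))
  · have : ∀ i ∈ Finset.univ, kEnum N i = kEnum n i :=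
      (Finset.sum_eq_sum_iff_of_le (fun i _ => hc i)).1 he.symm
    exact absurd (this t (Finset.mem_univ t)) (ne_of_gt hlt)

/-- Determinant is additive in a row over finite sums. -/
lemma det_updateRow_finsum {n : ℕ} (M : Matrix (Fin n) (Fin n) ℂ) (i : Fin n)
    {α : Type*} (t : Finset α) (v : α → Fin n → ℂ) :
    (M.updateRow i (∑ a ∈ t, v a)).det = ∑ a ∈ t, (M.updateRow i (v a)).det := by
  classical
  induction t using Finset.induction with
  | empty =>
      rw [Finset.sum_empty, Finset.sum_empty]
      exact Matrix.det_eq_zero_of_row_eq_zero i (by simp)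
  | insert _ _ h ih =>
      rw [Finset.sum_insert h, Matrix.det_updateRow_add, ih, Finset.sum_insert h]

variable (η : Fin s → ℕ → ℂ) (H : ℕ → Fin s → ℂ)
variable (hH : ∀ n j, H n j = η j (kEnum n j))

include hbij hmono hH in
/-- The key factorization of the generalized Vandermonde determinant of the
intertwining sequence with a free last point `z`. -/
lemma key (N : ℕ) (z : Fin s → ℂ) :
    VDM kEnum (Fin.snoc (fun i : Fin N => H i) z) =
      (∏ j, ∏ i ∈ range (kEnum N j), (z j - η j i)) *
        VDM kEnum (fun i : Fin N => H i) := by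
  classical
  set κ : Fin s → ℕ := kEnum N with hκ
  set P : Fin (N + 1) → Fin s → ℂ := Fin.snoc (fun i : Fin N => H i) z with hPdef
  set p : Fin s → Polynomial ℂ :=
    fun j => ∏ i ∈ range (κ j), (Polynomial.X - Polynomial.C (η j i)) with hpdef
  have hmonic : ∀ j, (p j).Monic := fun j =>
    Polynomial.monic_prod_of_monic _ _ fun i _ => Polynomial.monic_X_sub_C _
  have hdeg : ∀ j, (p j).natDegree = κ j := by
    intro j
    rw [hpdef]
    rw [Polynomial.natDegree_prod_of_monic _ _ fun i _ => Polynomial.monic_X_sub_C _]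
    simp [Polynomial.natDegree_X_sub_C]
  set c : (Fin s → ℕ) → ℂ := fun β => ∏ j, (p j).coeff (β j) with hcdef
  have hcκ : c κ = 1 := by
    rw [hcdef]
    refine Finset.prod_eq_one fun j _ => ?_
    rw [← hdeg j]
    exact (hmonic j).coeff_natDegree
  have hczero : ∀ β : Fin s → ℕ, (∃ j, κ j < β j) → c β = 0 := by
    rintro β ⟨j, hj⟩
    refine Finset.prod_eq_zero (Finset.mem_univ j) ?_
    exact Polynomial.coeff_eq_zero_of_natDegree_lt (by rw [hdeg j]; exact hj)
  have hexpand : ∀ x : Fin s → ℂ,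
      ∏ j, ∏ i ∈ range (κ j), (x j - η j i) =
        ∑ β ∈ Fintype.piFinset (fun j => range (κ j + 1)), c β * ∏ j, x j ^ β j := by
    intro x
    have h1 : ∀ j, ∏ i ∈ range (κ j), (x j - η j i) =
        ∑ d ∈ range (κ j + 1), (p j).coeff d * x j ^ d := by
      intro j
      have he : (p j).eval (x j) = ∏ i ∈ range (κ j), (x j - η j i) := by
        rw [hpdef]; simp [Polynomial.eval_prod]
      rw [← he, ← hdeg j, Polynomial.eval_eq_sum_range]
    simp_rw [h1]
    rw [Finset.prod_univ_sum]
    refine Finset.sum_congr rfl fun β _ => ?_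
    rw [Finset.prod_mul_distrib]
  -- the matrix
  set M : Matrix (Fin (N + 1)) (Fin (N + 1)) ℂ :=
    Matrix.of (fun i n : Fin (N + 1) => ∏ t, P n t ^ kEnum (i : ℕ) t) with hMdef
  have hVDM : VDM kEnum P = M.det := rfl
  -- the row of values of Q at the points
  set r : Fin (N + 1) → ℂ := fun n => ∏ j, ∏ i ∈ range (κ j), (P n j - η j i) with hrdef
  have hκmem : κ ∈ Fintype.piFinset (fun j => range (κ j + 1)) := by
    rw [Fintype.mem_piFinset]; exact fun j => Finset.mem_range.2 (Nat.lt_succ_self _)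
  have hrr : r = M (Fin.last N) + ∑ m : Fin N, c (kEnum (m : ℕ)) • M m.castSucc := by
    funext n
    rw [Pi.add_apply, Finset.sum_apply]
    show (∏ j, ∏ i ∈ range (κ j), (P n j - η j i)) =
      M (Fin.last N) n + ∑ m : Fin N, (c (kEnum (m : ℕ)) • M m.castSucc) n
    rw [hexpand (P n)]
    rw [← Finset.add_sum_erase _ _ hκmem]
    congr 1
    · rw [hcκ, one_mul, hMdef]
      simp [Fin.val_last, hκ]
    · have hRHS : ∀ m : Fin N, (c (kEnum (m : ℕ)) • M m.castSucc) n =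
          c (kEnum (m : ℕ)) * ∏ t, P n t ^ kEnum (m : ℕ) t := by
        intro m
        simp [hMdef, Fin.coe_castSucc]
      rw [Finset.sum_congr rfl fun m _ => hRHS m]
      rw [Fin.sum_univ_eq_sum_range (fun m => c (kEnum m) * ∏ t, P n t ^ kEnum m t) N]
      rw [← Finset.sum_image
        (f := fun β : Fin s → ℕ => c β * ∏ t, P n t ^ β t) (g := kEnum)
        (fun x _ y _ h => hbij.1 h)]
      refine Finset.sum_subset ?_ ?_
      · intro β hβ
        obtain ⟨hne, hpi⟩ := Finset.mem_erase.1 hβ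
        have hle : ∀ j, β j ≤ κ j := fun j =>
          Nat.lt_succ_iff.1 (Finset.mem_range.1 (Fintype.mem_piFinset.1 hpi j))
        obtain ⟨m, hmN, hm⟩ := mem_image_of_le_ne kEnum hbij hmono hle hne
        exact Finset.mem_image.2 ⟨m, Finset.mem_range.2 hmN, hm⟩
      · intro β hβ hβ'
        obtain ⟨m, hm, rfl⟩ := Finset.mem_image.1 hβ
        have hne : kEnum m ≠ κ := by
          intro hEq
          have h1 : m = N := hbij.1 hEq
          have h2 : m < N := Finset.mem_range.1 hm
          omega
        have hnpi : kEnum m ∉ Fintype.piFinset (fun j => range (κ j + 1)) := by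
          intro hpi
          exact hβ' (Finset.mem_erase.2 ⟨hne, hpi⟩)
        have : ∃ j, κ j < kEnum m j := by
          by_contra hc
          push_neg at hc
          exact hnpi (Fintype.mem_piFinset.2 fun j =>
            Finset.mem_range.2 (Nat.lt_succ_of_le (hc j)))
        rw [hczero _ this, zero_mul]
  -- Step 1 : row operation does not change the determinant
  have hdet1 : M.det = (M.updateRow (Fin.last N) r).det := by
    rw [hrr, Matrix.det_updateRow_add, det_updateRow_finsum, Matrix.updateRow_eq_self]
    have hz0 : ∀ m : Fin N,
        (M.updateRow (Fin.last N) (c (kEnum (m : ℕ)) • M m.castSucc)).det = 0 := by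
      intro m
      rw [Matrix.det_updateRow_smul]
      refine mul_eq_zero_of_right _ ?_
      refine Matrix.det_zero_of_row_eq (i := Fin.last N) (j := m.castSucc)
        (Fin.castSucc_lt_last m).ne' ?_
      rw [Matrix.updateRow_self, Matrix.updateRow_ne (Fin.castSucc_lt_last m).ne]
    rw [Finset.sum_congr rfl fun m _ => hz0 m, Finset.sum_const_zero, add_zero]
  -- Step 2 : the new last row vanishes except at the last column
  have hrow0 : ∀ m : Fin N, r m.castSucc = 0 := by
    intro m
    obtain ⟨j, hj⟩ := exists_lt_coord kEnum hmono (m.isLt : (m : ℕ) < N)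
    refine Finset.prod_eq_zero (Finset.mem_univ j) ?_
    refine Finset.prod_eq_zero (Finset.mem_range.2 hj) ?_
    have hPm : P m.castSucc = H (m : ℕ) := by
      rw [hPdef]; exact Fin.snoc_castSucc _ _ m
    rw [hPm, hH]
    exact sub_self _
  have hrlast : r (Fin.last N) = ∏ j, ∏ i ∈ range (κ j), (z j - η j i) := by
    have hPl : P (Fin.last N) = z := by rw [hPdef]; exact Fin.snoc_last _ _
    rw [hrdef]
    simp only [hPl]
  -- Step 3 : expand along the last row
  have hsub : (M.updateRow (Fin.last N) r).submatrix
      (Fin.last N).succAbove (Fin.last N).succAbove =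
      Matrix.of (fun i j : Fin N => ∏ t, H (j : ℕ) t ^ kEnum (i : ℕ) t) := by
    ext i j
    simp only [Matrix.submatrix_apply, Fin.succAbove_last]
    rw [Matrix.updateRow_ne (Fin.castSucc_lt_last i).ne]
    have hPj : P j.castSucc = H (j : ℕ) := by
      rw [hPdef]; exact Fin.snoc_castSucc _ _ j
    simp [hMdef, hPj, Fin.coe_castSucc]
  have hdet2 : (M.updateRow (Fin.last N) r).det =
      (∏ j, ∏ i ∈ range (κ j), (z j - η j i)) * VDM kEnum (fun i : Fin N => H i) := by
    rw [Matrix.det_succ_row _ (Fin.last N)]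
    rw [Finset.sum_eq_single (Fin.last N)]
    · rw [Matrix.updateRow_self, hrlast, hsub]
      have hsign : ((-1 : ℂ)) ^ ((Fin.last N : ℕ) + (Fin.last N : ℕ)) = 1 :=
        Even.neg_one_pow ⟨(Fin.last N : ℕ), rfl⟩
      rw [hsign, one_mul]
      rfl
    · intro b _ hb
      obtain ⟨m, rfl⟩ := Fin.exists_castSucc_eq.2 hb
      rw [Matrix.updateRow_self, hrow0 m, mul_zero, zero_mul]
    · intro h
      exact absurd (Finset.mem_univ _) h
  rw [hVDM, hdet1, hdet2]

end

end Statement4Aux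

/-- the intertwining sequence of sequences `(η^{(j)}_i)_i ⊂ K_j`
(pairwise distinct, starting on `∂K_j`) is a Leja sequence for `K_1 × ⋯ × K_s`
iff each `(η^{(j)}_i)_i` is a Leja sequence for `K_j`. -/
theorem statement4 {s : ℕ} (hs : 2 ≤ s)
    (kEnum : ℕ → Fin s → ℕ) (hbij : Function.Bijective kEnum)
    (hmono : ∀ a b : ℕ, a < b → GradedLexLt (kEnum a) (kEnum b))
    (K : Fin s → Set ℂ) (hK : ∀ j, IsCompact (K j))
    (η : Fin s → ℕ → ℂ) (hdist : ∀ j, Function.Injective (η j))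
    (hmem : ∀ j i, η j i ∈ K j) (hbd : ∀ j, η j 0 ∈ frontier (K j))
    (H : ℕ → Fin s → ℂ) (hH : ∀ n j, H n j = η j (kEnum n j)) :
    IsLejaSeqMulti kEnum {z : Fin s → ℂ | ∀ j, z j ∈ K j} H ↔
      ∀ j : Fin s, IsLejaSeq1 (K j) (η j) := by
  classical
  have hk0 : kEnum 0 = fun _ => 0 := Statement4Aux.kEnum_zero kEnum hbij hmono
  have hvdm_ne : ∀ N : ℕ, VDM kEnum (fun i : Fin N => H i) ≠ 0 := by
    intro N
    induction N with
    | zero => simp [VDM, Matrix.det_isEmpty]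
    | succ N ih =>
      have hsnoc : (fun i : Fin (N + 1) => H i) = Fin.snoc (fun i : Fin N => H i) (H N) := by
        funext i
        refine Fin.lastCases ?_ ?_ i
        · simp
        · intro m; simp
      rw [hsnoc, Statement4Aux.key kEnum hbij hmono η H hH N (H N)]
      refine mul_ne_zero ?_ ih
      refine Finset.prod_ne_zero_iff.2 fun j _ => ?_
      refine Finset.prod_ne_zero_iff.2 fun i hi => ?_
      rw [hH]
      exact sub_ne_zero.2 ((hdist j).ne (ne_of_gt (Finset.mem_range.1 hi)))
  have habs : ∀ (N : ℕ) (z : Fin s → ℂ),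
      ‖VDM kEnum (Fin.snoc (fun i : Fin N => H i) z)‖ =
        (∏ j, ∏ i ∈ range (kEnum N j), ‖z j - η j i‖) *
          ‖VDM kEnum (fun i : Fin N => H i)‖ := by
    intro N z
    rw [Statement4Aux.key kEnum hbij hmono η H hH N z, norm_mul]
    congr 1
    rw [norm_prod]
    exact Finset.prod_congr rfl fun j _ => norm_prod _ _
  constructor
  · -- multi Leja implies each coordinate is Leja
    intro hL j
    refine ⟨hmem j, hbd j, ?_⟩
    intro k hk
    set κ₀ : Fin s → ℕ := fun t => if t = j then k else 0 with hκ₀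
    obtain ⟨N, hN⟩ := hbij.2 κ₀
    have hN1 : 1 ≤ N := by
      rcases Nat.eq_zero_or_pos N with rfl | h
      · exfalso
        rw [hk0] at hN
        have hj := congrFun hN j
        simp [hκ₀] at hj
        omega
      · exact h
    have hG := hL.2.2 N hN1
    have hprod : ∀ z : Fin s → ℂ,
        (∏ t, ∏ i ∈ range (kEnum N t), ‖z t - η t i‖) =
          ∏ i ∈ range k, ‖z j - η j i‖ := by
      intro z
      rw [hN]
      rw [Fintype.prod_eq_single j (fun t ht => by simp [hκ₀, ht])]
      simp [hκ₀]
    have hCpos : 0 < ‖VDM kEnum (fun i : Fin N => H i)‖ :=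
      norm_pos_iff.2 (hvdm_ne N)
    have hHNj : H N j = η j k := by rw [hH, hN]; simp [hκ₀]
    constructor
    · exact ⟨η j k, hmem j k, rfl⟩
    · rintro y ⟨x, hx, rfl⟩
      set z : Fin s → ℂ := fun t => if t = j then x else η t 0 with hz
      have hzK : z ∈ {w : Fin s → ℂ | ∀ t, w t ∈ K t} := by
        intro t
        by_cases ht : t = j
        · subst ht; simpa [hz] using hx
        · simpa [hz, ht] using hmem t 0
      have hle : ‖VDM kEnum (Fin.snoc (fun i : Fin N => H i) z)‖ ≤
          ‖VDM kEnum (Fin.snoc (fun i : Fin N => H i) (H N))‖ :=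
        hG.2 ⟨z, hzK, rfl⟩
      show (∏ i ∈ range k, ‖x - η j i‖) ≤ ∏ i ∈ range k, ‖η j k - η j i‖
      rw [habs N z, habs N (H N), hprod z, hprod (H N)] at hle
      have hzj : z j = x := by simp [hz]
      rw [hzj, hHNj] at hle
      exact le_of_mul_le_mul_right hle hCpos
  · -- each coordinate Leja implies multi Leja
    intro hL
    refine ⟨?_, ?_, ?_⟩
    · intro n j
      rw [hH n j]
      exact hmem j _
    · -- frontier condition
      have hSet : {z : Fin s → ℂ | ∀ j, z j ∈ K j} = Set.pi Set.univ K := by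
        ext w; simp [Set.mem_pi]
      rw [hSet]
      have hH0 : ∀ j, H 0 j = η j 0 := fun j => by rw [hH, hk0]
      have hbd' : ∀ j, η j 0 ∈ closure (K j) ∧ η j 0 ∉ interior (K j) := fun j => hbd j
      refine ⟨?_, ?_⟩
      · rw [closure_pi_set]
        intro j _
        rw [hH0 j]
        exact (hbd' j).1
      · intro hint
        rw [interior_pi_set Set.finite_univ] at hint
        have j0 : Fin s := ⟨0, by omega⟩
        have hji := hint j0 (Set.mem_univ _)
        rw [hH0 j0] at hji
        exact (hbd' j0).2 hji
    · intro N hN1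
      constructor
      · exact ⟨H N, fun j => by rw [hH]; exact hmem j _, rfl⟩
      · rintro y ⟨z, hz, rfl⟩
        show ‖VDM kEnum (Fin.snoc (fun i : Fin N => H i) z)‖ ≤
          ‖VDM kEnum (Fin.snoc (fun i : Fin N => H i) (H N))‖
        rw [habs N z, habs N (H N)]
        refine mul_le_mul_of_nonneg_right ?_ (norm_nonneg _)
        refine Finset.prod_le_prod
          (fun j _ => Finset.prod_nonneg fun i _ => norm_nonneg _) ?_
        intro j _
        rcases Nat.eq_zero_or_pos (kEnum N j) with h0 | h1
        · simp [h0]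
        · have hub := ((hL j).2.2 (kEnum N j) h1).2 ⟨z j, hz j, rfl⟩
          rw [hH N j]
          exact hub
end

section
/- Let (η_i)_{i≥0} be the explicit Leja sequence for the closed unit disk given by η_k = exp(iπ Σ_{l=0}^{s'} j_l 2^{−l}) where k = Σ_{l=0}^{s'} j_l 2^{l} with binary digits j_l ∈ {0,1} (so η_0 = 1). For j = 1,…,s let (η^{(j)}_i)_{i≥0} be this sequence. Then the intertwining sequence of (η^{(1)}_i)_{i≥0},…,(η^{(s)}_i)_{i≥0} is a Leja sequence for the closed unit polydisc D̄^s ⊂ ℂ^s. -/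
open Finset

/-- The explicit Leja sequence for the closed unit disk:
`η_k = exp(iπ ∑_l j_l 2^{−l})` where `k = ∑_l j_l 2^l` in binary
(note every binary digit position `l` of `k` satisfies `l ≤ k`). -/
noncomputable def lejaDiskPoint (k : ℕ) : ℂ :=
  Complex.exp ((Real.pi : ℂ) * Complex.I *
    ∑ l ∈ range (k + 1), if Nat.testBit k l then ((2 : ℂ) ^ l)⁻¹ else 0)

noncomputable def rseq (k : ℕ) : ℝ :=
  ∑ l ∈ range (k + 1), if Nat.testBit k l then ((2 : ℝ) ^ l)⁻¹ else 0

lemma rseq_ext {k M : ℕ} (h : k + 1 ≤ M) :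
    rseq k = ∑ l ∈ range M, if Nat.testBit k l then ((2 : ℝ) ^ l)⁻¹ else 0 := by
  refine Finset.sum_subset (by simpa using Finset.range_subset_range.2 h) ?_
  intro l hl hl'
  simp only [Finset.mem_range, not_lt] at hl'
  have : k < 2 ^ l := lt_of_lt_of_le (Nat.lt_two_pow_self (n := k))
    (Nat.pow_le_pow_right (by norm_num) (by omega))
  rw [Nat.testBit_eq_false_of_lt this]
  simp

lemma lejaDiskPoint_eq (k : ℕ) :
    lejaDiskPoint k = Complex.exp ((Real.pi : ℂ) * Complex.I * (rseq k : ℝ)) := by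
  unfold lejaDiskPoint rseq
  congr 1
  congr 1
  rw [Complex.ofReal_sum]
  refine Finset.sum_congr rfl fun l _ => ?_
  rw [apply_ite Complex.ofReal]
  push_cast
  ring_nf

lemma rseq_def (k : ℕ) :
    rseq k = ∑ l ∈ range (k + 1), if Nat.testBit k l then ((2 : ℝ) ^ l)⁻¹ else 0 := rfl

lemma rseq_nonneg (k : ℕ) : 0 ≤ rseq k := by
  refine Finset.sum_nonneg fun l _ => ?_
  split <;> positivity

lemma rseq_zero : rseq 0 = 0 := by simp [rseq]

lemma rseq_rec (m b : ℕ) (hb : b ≤ 1) : rseq (2 * m + b) = b + rseq m / 2 := by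
  rcases Nat.eq_zero_or_pos (m + b) with h0 | h0
  · obtain ⟨hm, hb0⟩ : m = 0 ∧ b = 0 := by omega
    subst hm; subst hb0; simp [rseq_zero]
  conv_lhs => rw [rseq_def]
  rw [Finset.sum_range_succ']
  have hbit0 : (2 * m + b).testBit 0 = decide (b = 1) := by
    rw [Nat.testBit_zero]
    rcases Nat.le_one_iff_eq_zero_or_eq_one.1 hb with h | h <;> subst h <;> simp [Nat.mul_add_mod] <;> omega
  have hbits : ∀ l, (2 * m + b).testBit (l + 1) = m.testBit l := by
    intro l
    rw [Nat.testBit_succ]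
    congr 1
    omega
  have h2 : (∑ l ∈ range (2 * m + b), if (2 * m + b).testBit (l + 1) then ((2:ℝ) ^ (l+1))⁻¹ else 0)
      = (∑ l ∈ range (2 * m + b), if m.testBit l then ((2:ℝ) ^ l)⁻¹ else 0) / 2 := by
    rw [Finset.sum_div]
    refine Finset.sum_congr rfl fun l _ => ?_
    rw [hbits]
    split
    · rw [pow_succ]; field_simp
    · simp
  have h3 : (∑ l ∈ range (2 * m + b), if m.testBit l then ((2:ℝ) ^ l)⁻¹ else 0) = rseq m :=
    (rseq_ext (by omega)).symm
  rw [h2, h3, hbit0]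
  rcases Nat.le_one_iff_eq_zero_or_eq_one.1 hb with h | h <;> subst h <;> simp <;> ring

lemma rseq_lt_two (k : ℕ) : rseq k < 2 := by
  have h1 : rseq k ≤ ∑ l ∈ range (k + 1), ((2 : ℝ) ^ l)⁻¹ := by
    refine Finset.sum_le_sum fun l _ => ?_
    split
    · exact le_rfl
    · positivity
  have h2 : ∑ l ∈ range (k + 1), ((2 : ℝ) ^ l)⁻¹ < 2 := by
    have := geom_sum_eq (by norm_num : (2:ℝ)⁻¹ ≠ 1) (k + 1)
    have h3 : ∀ l, ((2:ℝ) ^ l)⁻¹ = ((2:ℝ)⁻¹) ^ l := fun l => by rw [inv_pow]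
    simp only [h3]
    rw [this]
    have : (0:ℝ) < (2:ℝ)⁻¹ ^ (k+1) := by positivity
    rw [div_eq_mul_inv]
    nlinarith
  linarith

lemma rseq_two_mul (m : ℕ) : rseq (2 * m) = rseq m / 2 := by
  simpa using rseq_rec m 0 (by norm_num)

lemma rseq_two_mul_add_one (m : ℕ) : rseq (2 * m + 1) = 1 + rseq m / 2 := by
  simpa using rseq_rec m 1 le_rfl

lemma rseq_parity (k : ℕ) : rseq k = (k % 2 : ℕ) + rseq (k / 2) / 2 := by
  rcases Nat.even_or_odd k with ⟨m, hm⟩ | ⟨m, hm⟩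
  · have h2 : k = 2 * m := by omega
    subst h2
    rw [rseq_two_mul]
    simp [Nat.mul_mod_right, Nat.mul_div_cancel_left _ (by norm_num : 0 < 2)]
  · subst hm
    rw [rseq_two_mul_add_one]
    have h1 : (2 * m + 1) % 2 = 1 := by omega
    have h2 : (2 * m + 1) / 2 = m := by omega
    rw [h1, h2]
    norm_num

lemma rseq_even (p : ℕ) : ∀ m < 2 ^ p, ∃ t : ℤ, 2 ^ p * rseq m = 2 * t := by
  induction p with
  | zero =>
    intro m hm
    interval_cases m
    exact ⟨0, by simp [rseq_zero]⟩
  | succ p ih =>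
    intro m hm
    rcases Nat.even_or_odd m with ⟨c, hc⟩ | ⟨c, hc⟩
    · have hm2 : m = 2 * c := by omega
      obtain ⟨t, ht⟩ := ih c (by omega)
      refine ⟨t, ?_⟩
      rw [hm2, rseq_two_mul, pow_succ]
      linarith
    · obtain ⟨t, ht⟩ := ih c (by omega)
      refine ⟨2 ^ p + t, ?_⟩
      rw [hc, rseq_two_mul_add_one, pow_succ]
      push_cast
      linarith

lemma rseq_two_pow_add (p : ℕ) : ∀ l < 2 ^ p, rseq (2 ^ p + l) = rseq l + ((2:ℝ) ^ p)⁻¹ := by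
  induction p with
  | zero =>
    intro l hl
    interval_cases l
    have : rseq 1 = 1 := by
      have := rseq_rec 0 1 le_rfl
      simpa [rseq_zero] using this
    simp [this, rseq_zero]
  | succ p ih =>
    intro l hl
    have h1 : 2 ^ (p+1) + l = 2 * (2 ^ p + l / 2) + l % 2 := by
      rw [pow_succ]; omega
    rw [h1, rseq_rec _ _ (by omega), ih (l / 2) (by omega)]
    rw [rseq_parity l, pow_succ]
    have : (0:ℝ) < 2 ^ p := by positivity
    field_simp
    ring


lemma rseq_eq_zero : ∀ k : ℕ, rseq k = 0 → k = 0 := by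
  intro k
  induction k using Nat.strong_induction_on with
  | _ k ih =>
    intro h
    rcases Nat.eq_zero_or_pos k with h0 | h0
    · exact h0
    rcases Nat.even_or_odd k with ⟨m, hm⟩ | ⟨m, hm⟩
    · have h2 : k = 2 * m := by omega
      subst h2
      rw [rseq_two_mul] at h
      have : rseq m = 0 := by linarith
      have := ih m (by omega) this
      omega
    · subst hm
      rw [rseq_two_mul_add_one] at h
      have := rseq_nonneg m
      linarith

lemma rseq_inj : ∀ a : ℕ, ∀ b : ℕ, rseq a = rseq b → a = b := by
  intro a
  induction a using Nat.strong_induction_on with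
  | _ a ih =>
    intro b h
    rcases Nat.eq_zero_or_pos a with h0 | h0
    · subst h0
      exact (rseq_eq_zero b (by rw [← h, rseq_zero])).symm
    have hb0 : b ≠ 0 := by
      intro hb
      subst hb
      exact absurd (rseq_eq_zero a (by rw [h, rseq_zero])) (by omega)
    have ha := rseq_parity a
    have hb := rseq_parity b
    have hha := rseq_nonneg (a / 2)
    have hhb := rseq_nonneg (b / 2)
    have hlta := rseq_lt_two (a / 2)
    have hltb := rseq_lt_two (b / 2)
    have hmod : a % 2 = b % 2 := by
      rcases Nat.lt_or_ge (a % 2) (b % 2) with hlt | hge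
      · have h1 : a % 2 = 0 := by omega
        have h2 : b % 2 = 1 := by omega
        rw [ha, hb, h1, h2] at h
        push_cast at h
        linarith
      · rcases Nat.lt_or_ge (b % 2) (a % 2) with hlt2 | hge2
        · have h1 : b % 2 = 0 := by omega
          have h2 : a % 2 = 1 := by omega
          rw [ha, hb, h1, h2] at h
          push_cast at h
          linarith
        · omega
    have hdiv : rseq (a / 2) = rseq (b / 2) := by
      rw [ha, hb, hmod] at h
      have := add_left_cancel h
      linarith
    have := ih (a / 2) (by omega) (b / 2) hdiv
    omega


lemma abs_exp_pi_I_real (x : ℝ) :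
    ‖Complex.exp ((Real.pi : ℂ) * Complex.I * (x : ℝ))‖ = 1 := by
  rw [Complex.norm_exp]
  convert Real.exp_zero using 2
  have : (Real.pi : ℂ) * Complex.I * (x : ℝ) = (Real.pi * x : ℝ) * Complex.I := by
    push_cast; ring
  rw [this]
  simp

noncomputable def rho (p : ℕ) : ℂ :=
  Complex.exp ((Real.pi : ℂ) * Complex.I * ((((2:ℝ) ^ p)⁻¹ : ℝ) : ℂ))

lemma eta_ne_zero (k : ℕ) : lejaDiskPoint k ≠ 0 := by
  rw [lejaDiskPoint_eq]; exact Complex.exp_ne_zero _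

lemma abs_eta (k : ℕ) : ‖lejaDiskPoint k‖ = 1 := by
  rw [lejaDiskPoint_eq]; exact abs_exp_pi_I_real _

lemma abs_rho (p : ℕ) : ‖rho p‖ = 1 := abs_exp_pi_I_real _

lemma rho_ne_zero (p : ℕ) : rho p ≠ 0 := Complex.exp_ne_zero _

lemma eta_zero_val : lejaDiskPoint 0 = 1 := by
  rw [lejaDiskPoint_eq, rseq_zero]
  simp

lemma rho_pow (p : ℕ) : rho p ^ (2 ^ p) = -1 := by
  rw [rho, ← Complex.exp_nat_mul]
  have h2 : ((2:ℂ) ^ p) ≠ 0 := pow_ne_zero _ two_ne_zero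
  have h : (2 ^ p : ℕ) * ((Real.pi : ℂ) * Complex.I * ((((2:ℝ) ^ p)⁻¹ : ℝ) : ℂ))
      = (Real.pi : ℂ) * Complex.I := by
    push_cast
    field_simp
  rw [h, Complex.exp_pi_mul_I]

lemma eta_pow_two_pow {p l : ℕ} (hl : l < 2 ^ p) : lejaDiskPoint l ^ (2 ^ p) = 1 := by
  obtain ⟨t, ht⟩ := rseq_even p l hl
  rw [lejaDiskPoint_eq, ← Complex.exp_nat_mul]
  have hc : (2:ℂ) ^ p * ((rseq l : ℝ) : ℂ) = 2 * (t : ℂ) := by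
    exact_mod_cast congrArg (Complex.ofReal) ht
  have h : (2 ^ p : ℕ) * ((Real.pi : ℂ) * Complex.I * ((rseq l : ℝ) : ℂ))
      = (t : ℤ) * (2 * (Real.pi : ℂ) * Complex.I) := by
    push_cast
    linear_combination (Real.pi * Complex.I : ℂ) * hc
  rw [h, Complex.exp_int_mul_two_pi_mul_I]

lemma eta_two_pow_add {p l : ℕ} (hl : l < 2 ^ p) :
    lejaDiskPoint (2 ^ p + l) = rho p * lejaDiskPoint l := by
  rw [lejaDiskPoint_eq, lejaDiskPoint_eq, rho, ← Complex.exp_add,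
    rseq_two_pow_add p l hl]
  congr 1
  push_cast
  ring

lemma eta_inj : Function.Injective lejaDiskPoint := by
  intro a b h
  rw [lejaDiskPoint_eq, lejaDiskPoint_eq] at h
  rw [Complex.exp_eq_exp_iff_exists_int] at h
  obtain ⟨n, hn⟩ := h
  have h2 : ((rseq a - rseq b - 2 * n : ℝ) : ℂ) * ((Real.pi : ℂ) * Complex.I) = 0 := by
    push_cast
    push_cast at hn
    linear_combination hn
  have h3 : ((rseq a - rseq b - 2 * n : ℝ) : ℂ) = 0 := by
    rcases mul_eq_zero.1 h2 with h | h
    · exact h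
    · exfalso
      rcases mul_eq_zero.1 h with h | h
      · exact Real.pi_ne_zero (by exact_mod_cast h)
      · exact Complex.I_ne_zero h
  have h4 : rseq a - rseq b - 2 * n = 0 := by exact_mod_cast h3
  have ha0 := rseq_nonneg a
  have ha2 := rseq_lt_two a
  have hb0 := rseq_nonneg b
  have hb2 := rseq_lt_two b
  have hn0 : n = 0 := by
    rcases lt_trichotomy n 0 with h | h | h
    · have : (n : ℝ) ≤ -1 := by exact_mod_cast (by omega : n ≤ -1)
      linarith
    · exact h
    · have : (1 : ℝ) ≤ n := by exact_mod_cast h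
      linarith
  rw [hn0] at h4
  push_cast at h4
  exact rseq_inj a b (by linarith)

lemma prod_two_pow (p : ℕ) (w : ℂ) :
    ∏ l ∈ range (2 ^ p), (w - lejaDiskPoint l) = w ^ (2 ^ p) - 1 := by
  induction p generalizing w with
  | zero => simp [eta_zero_val]
  | succ p ih =>
    have hsplit : 2 ^ (p + 1) = 2 ^ p + 2 ^ p := by ring
    rw [hsplit, Finset.prod_range_add, ih]
    have h2 : ∏ l ∈ range (2 ^ p), (w - lejaDiskPoint (2 ^ p + l))
        = w ^ (2 ^ p) + 1 := by
      have he : ∀ l ∈ range (2 ^ p), (w - lejaDiskPoint (2 ^ p + l))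
          = rho p * (w / rho p - lejaDiskPoint l) := by
        intro l hl
        rw [eta_two_pow_add (Finset.mem_range.1 hl)]
        field_simp [rho_ne_zero p]
      rw [Finset.prod_congr rfl he, Finset.prod_mul_distrib, Finset.prod_const,
        Finset.card_range, ih, rho_pow]
      rw [div_pow, rho_pow]
      field_simp
      ring
    rw [h2]
    ring

lemma leja_uni : ∀ m : ℕ, ∀ w : ℂ, ‖w‖ ≤ 1 →
    ∏ l ∈ range m, ‖w - lejaDiskPoint l‖
      ≤ ∏ l ∈ range m, ‖lejaDiskPoint m - lejaDiskPoint l‖ := by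
  intro m
  induction m using Nat.strong_induction_on with
  | _ m ih =>
    intro w hw
    rcases Nat.eq_zero_or_pos m with h0 | h0
    · subst h0; simp
    set p := Nat.log 2 m with hp
    have hpm : 2 ^ p ≤ m := Nat.pow_log_le_self 2 (by omega)
    have hmp : m < 2 ^ (p + 1) := Nat.lt_pow_succ_log_self (by norm_num) m
    set r := m - 2 ^ p with hr
    have hm : m = 2 ^ p + r := by omega
    have hrlt : r < 2 ^ p := by
      have : 2 ^ (p + 1) = 2 ^ p + 2 ^ p := by ring
      omega
    have hrm : r < m := by
      have : 0 < 2 ^ p := pow_pos (by norm_num) p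
      omega
    have habs : ∀ (S : Finset ℕ) (f : ℕ → ℂ),
        ∏ l ∈ S, ‖f l‖ = ‖∏ l ∈ S, f l‖ := by
      intro S f
      exact (norm_prod S f).symm
    have key : ∀ u : ℂ, ∏ l ∈ range m, ‖u - lejaDiskPoint l‖
        = ‖u ^ (2 ^ p) - 1‖ *
          ∏ l ∈ range r, ‖u / rho p - lejaDiskPoint l‖ := by
      intro u
      conv_lhs => rw [hm]
      rw [Finset.prod_range_add]
      congr 1
      · rw [habs, prod_two_pow]
      · refine Finset.prod_congr rfl fun l hl => ?_
        rw [eta_two_pow_add (lt_trans (Finset.mem_range.1 hl) hrlt)]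
        conv_rhs => rw [show u / rho p - lejaDiskPoint l
          = (u - rho p * lejaDiskPoint l) / rho p from by
            rw [sub_div, mul_div_cancel_left₀ _ (rho_ne_zero p)]]
        rw [norm_div, abs_rho, div_one]
    have hw2 : ‖w ^ (2 ^ p) - 1‖ ≤ 2 := by
      calc ‖w ^ (2 ^ p) - 1‖
          ≤ ‖w ^ (2 ^ p)‖ + ‖(1 : ℂ)‖ := by
            exact norm_sub_le _ _
        _ ≤ 1 + 1 := by
            rw [norm_one, norm_pow]
            have : ‖w‖ ^ (2 ^ p) ≤ 1 := pow_le_one₀ (norm_nonneg w) hw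
            linarith
        _ = 2 := by norm_num
    have hwrho : ‖w / rho p‖ ≤ 1 := by
      rw [norm_div, abs_rho, div_one]
      exact hw
    have hIH := ih r hrm (w / rho p) hwrho
    have hetam : lejaDiskPoint m = rho p * lejaDiskPoint r := by
      rw [hm]
      exact eta_two_pow_add hrlt
    have hRHS : ‖lejaDiskPoint m ^ (2 ^ p) - 1‖ = 2 := by
      rw [hetam, mul_pow, rho_pow, eta_pow_two_pow hrlt]
      norm_num
    have hdiv : lejaDiskPoint m / rho p = lejaDiskPoint r := by
      rw [hetam]
      field_simp [rho_ne_zero p]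
    rw [key w, key (lejaDiskPoint m), hRHS, hdiv]
    have hnn : (0:ℝ) ≤ ∏ l ∈ range r, ‖w / rho p - lejaDiskPoint l‖ :=
      Finset.prod_nonneg fun l _ => norm_nonneg _
    have hnn2 : (0:ℝ) ≤ ∏ l ∈ range r, ‖lejaDiskPoint r - lejaDiskPoint l‖ :=
      Finset.prod_nonneg fun l _ => norm_nonneg _
    nlinarith [hIH, hw2, norm_nonneg (w ^ (2 ^ p) - 1)]

section KE
variable {s : ℕ} {kEnum : ℕ → Fin s → ℕ}

lemma kEnum_index_le (hbij : Function.Bijective kEnum)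
    (hmono : ∀ a b : ℕ, a < b → GradedLexLt (kEnum a) (kEnum b))
    {N a : ℕ} (h : ∀ j, kEnum a j ≤ kEnum N j) : a ≤ N := by
  by_contra hc
  have hNa := hmono N a (by omega)
  rcases hNa with hlt | ⟨heq, t, hpre, hlt⟩
  · have : (∑ i, kEnum a i) ≤ ∑ i, kEnum N i :=
      Finset.sum_le_sum fun i _ => h i
    omega
  · exact absurd (h t) (by omega)

lemma kEnum_exists_lt
    (hmono : ∀ a b : ℕ, a < b → GradedLexLt (kEnum a) (kEnum b))
    {j N : ℕ} (h : j < N) : ∃ t, kEnum j t < kEnum N t := by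
  rcases hmono j N h with hlt | ⟨heq, t, hpre, hlt⟩
  · obtain ⟨t, _, ht⟩ := Finset.exists_lt_of_sum_lt hlt
    exact ⟨t, ht⟩
  · exact ⟨t, hlt⟩

end KE
lemma main_identity {s : ℕ} (kEnum : ℕ → Fin s → ℕ)
    (hbij : Function.Bijective kEnum)
    (hmono : ∀ a b : ℕ, a < b → GradedLexLt (kEnum a) (kEnum b))
    (H : ℕ → Fin s → ℂ) (hH : ∀ n j, H n j = lejaDiskPoint (kEnum n j))
    {N : ℕ} (hN : 1 ≤ N)
    (hdet : (Matrix.of fun i j : Fin N => ∏ t, H (j:ℕ) t ^ kEnum (i:ℕ) t).det ≠ 0)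
    (z : Fin s → ℂ) :
    VDM kEnum (Fin.snoc (fun i : Fin N => H i) z)
      = (Matrix.of fun i j : Fin N => ∏ t, H (j:ℕ) t ^ kEnum (i:ℕ) t).det *
        ∏ j, ∏ l ∈ range (kEnum N j), (z j - lejaDiskPoint l) := by
  classical
  set e : ℕ → (Fin s → ℂ) → ℂ := fun n w => ∏ t, w t ^ kEnum n t with he
  set Vm : Matrix (Fin N) (Fin N) ℂ := Matrix.of fun i j : Fin N => e (i:ℕ) (H (j:ℕ)) with hVm
  set β : Fin s → ℕ := kEnum N with hβ
  set Q : (Fin s → ℂ) → ℂ := fun w => ∏ j, ∏ l ∈ range (β j), (w j - lejaDiskPoint l) with hQ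
  set pvec : Fin (N+1) → ℂ := fun i => (-1) ^ ((i:ℕ) + N) *
      (Matrix.of fun i' j' : Fin N =>
        e ((Fin.succAbove i i' : Fin (N+1)) : ℕ) (H (j':ℕ))).det with hpvec
  have hPexp : ∀ w : Fin s → ℂ, VDM kEnum (Fin.snoc (fun i : Fin N => H i) w)
      = ∑ i : Fin (N+1), pvec i * e (i:ℕ) w := by
    intro w
    rw [VDM, Matrix.det_succ_column _ (Fin.last N)]
    refine Finset.sum_congr rfl fun i _ => ?_
    have h1 : (Matrix.of fun i j : Fin (N+1) =>
        ∏ t, (Fin.snoc (fun i : Fin N => H i) w : Fin (N+1) → Fin s → ℂ) j t ^ kEnum (i:ℕ) t)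
          i (Fin.last N)
        = e (i:ℕ) w := by
      simp only [Matrix.of_apply, Fin.snoc_last, he]
    have h2 : ((Matrix.of fun i j : Fin (N+1) =>
        ∏ t, (Fin.snoc (fun i : Fin N => H i) w : Fin (N+1) → Fin s → ℂ) j t ^ kEnum (i:ℕ) t).submatrix
          i.succAbove (Fin.last N).succAbove)
        = (Matrix.of fun i' j' : Fin N =>
            e ((Fin.succAbove i i' : Fin (N+1)) : ℕ) (H (j':ℕ))) := by
      ext i' j'
      simp only [Matrix.submatrix_apply, Matrix.of_apply, Fin.succAbove_last,
        Fin.snoc_castSucc, he]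
    rw [h1, h2, Fin.val_last, hpvec]
    ring
  have hPlast : pvec (Fin.last N) = Vm.det := by
    rw [hpvec]
    simp only [Fin.val_last, Fin.succAbove_last]
    have h3 : (Matrix.of fun i' j' : Fin N =>
        e ((Fin.castSucc i' : Fin (N+1)) : ℕ) (H (j':ℕ))) = Vm := by
      ext i' j'
      simp [he, hVm]
    rw [h3]
    have : Even (N + N) := ⟨N, rfl⟩
    rw [this.neg_one_pow, one_mul]
  have hPzero : ∀ j0 : Fin N,
      (∑ i : Fin (N+1), pvec i * e (i:ℕ) (H (j0:ℕ))) = 0 := by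
    intro j0
    rw [← hPexp (H (j0:ℕ))]
    rw [VDM]
    refine Matrix.det_zero_of_column_eq (ne_of_lt (Fin.castSucc_lt_last j0)) fun k => ?_
    simp [Fin.snoc_castSucc, Fin.snoc_last]
  -- polynomial expansion of Q
  set phi : Fin s → Polynomial ℂ :=
    fun j => ∏ l ∈ range (β j), (Polynomial.X - Polynomial.C (lejaDiskPoint l)) with hphi
  have hdeg : ∀ j, (phi j).natDegree = β j := by
    intro j
    rw [hphi, Polynomial.natDegree_prod_of_monic _ _
      (fun l _ => Polynomial.monic_X_sub_C _)]
    simp [Polynomial.natDegree_X_sub_C]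
  set q : Fin (N+1) → ℂ := fun i =>
    if (∀ j, kEnum (i:ℕ) j ≤ β j) then ∏ j, (phi j).coeff (kEnum (i:ℕ) j) else 0 with hq
  have hQsum : ∀ w : Fin s → ℂ, Q w = ∑ i : Fin (N+1), q i * e (i:ℕ) w := by
    intro w
    have h1 : ∀ j : Fin s, (∏ l ∈ range (β j), (w j - lejaDiskPoint l))
        = ∑ d ∈ range (β j + 1), (phi j).coeff d * w j ^ d := by
      intro j
      have : (∏ l ∈ range (β j), (w j - lejaDiskPoint l)) = (phi j).eval (w j) := by
        rw [hphi]
        simp [Polynomial.eval_prod]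
      rw [this]
      conv_lhs => rw [Polynomial.eval_eq_sum_range]
      rw [hdeg j]
    rw [hQ]
    simp only []
    rw [Finset.prod_congr rfl fun j _ => h1 j, Finset.prod_univ_sum]
    have h3 : ∑ i : Fin (N+1), q i * e (i:ℕ) w
        = ∑ i ∈ Finset.univ.filter (fun i : Fin (N+1) => ∀ j, kEnum (i:ℕ) j ≤ β j),
            (∏ j, (phi j).coeff (kEnum (i:ℕ) j)) * e (i:ℕ) w := by
      rw [Finset.sum_filter]
      refine Finset.sum_congr rfl fun i _ => ?_
      by_cases h : ∀ j, kEnum (i:ℕ) j ≤ β j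
      · rw [hq]; simp only [if_pos h]
      · rw [hq]; simp only [if_neg h, zero_mul, if_neg h]
    rw [h3]
    refine Eq.symm ?_
    refine Finset.sum_bij (fun i _ => fun j => kEnum (i:ℕ) j) ?_ ?_ ?_ ?_
    · intro a ha
      rw [Fintype.mem_piFinset]
      intro j
      rw [Finset.mem_range]
      have := (Finset.mem_filter.1 ha).2 j
      show kEnum (a:ℕ) j < β j + 1
      omega
    · intro a ha b hb hab
      have : (a:ℕ) = (b:ℕ) := hbij.injective (funext fun j => congrFun hab j)
      exact Fin.ext this
    · intro d hd
      obtain ⟨a, ha⟩ := hbij.surjective d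
      have hle : ∀ j, d j ≤ β j := by
        intro j
        have := Fintype.mem_piFinset.1 hd j
        rw [Finset.mem_range] at this
        omega
      have haN : a ≤ N := kEnum_index_le hbij hmono (by rw [ha]; exact hle)
      refine ⟨⟨a, by omega⟩, ?_, ?_⟩
      · rw [Finset.mem_filter]
        refine ⟨Finset.mem_univ _, fun j => ?_⟩
        show kEnum a j ≤ β j
        rw [ha]; exact hle j
      · funext j
        show kEnum a j = d j
        rw [ha]
    · intro a ha
      rw [Finset.prod_mul_distrib]
  have hqlast : q (Fin.last N) = 1 := by
    rw [hq]
    simp only [Fin.val_last]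
    rw [if_pos (fun j => le_refl _)]
    refine Finset.prod_eq_one fun j _ => ?_
    have hm : (phi j).Monic := Polynomial.monic_prod_of_monic _ _
      (fun l _ => Polynomial.monic_X_sub_C _)
    have := hm.coeff_natDegree
    rw [hdeg j] at this
    exact this
  have hQzero : ∀ j0 : Fin N, Q (H (j0:ℕ)) = 0 := by
    intro j0
    obtain ⟨t, ht⟩ := kEnum_exists_lt hmono (j0.isLt)
    rw [hQ]
    refine Finset.prod_eq_zero (Finset.mem_univ t) ?_
    refine Finset.prod_eq_zero (Finset.mem_range.2 ht) ?_
    rw [hH]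
    ring
  -- kernel argument
  set cvec : Fin (N+1) → ℂ := fun i => pvec i - Vm.det * q i with hcvec
  have hclast : cvec (Fin.last N) = 0 := by
    rw [hcvec]
    simp only [hPlast, hqlast, mul_one, sub_self]
  have hmv : Vm.transpose.mulVec (fun i : Fin N => cvec (Fin.castSucc i)) = 0 := by
    funext j0
    have h5 : ∑ i : Fin (N+1), cvec i * e (i:ℕ) (H (j0:ℕ)) = 0 := by
      have := hPzero j0
      have h6 := hQzero j0
      rw [hQsum (H (j0:ℕ))] at h6
      simp only [hcvec, sub_mul, Finset.sum_sub_distrib, mul_assoc]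
      rw [← Finset.mul_sum]
      rw [this, h6]
      simp
    rw [Fin.sum_univ_castSucc] at h5
    rw [hclast, zero_mul, add_zero] at h5
    show (∑ i : Fin N, Vm.transpose j0 i * cvec (Fin.castSucc i)) = 0
    rw [← h5]
    refine Finset.sum_congr rfl fun i _ => ?_
    rw [Matrix.transpose_apply, mul_comm]
    congr 1
  have hker : (fun i : Fin N => cvec (Fin.castSucc i)) = 0 :=
    Matrix.eq_zero_of_mulVec_eq_zero (by rwa [Matrix.det_transpose]) hmv
  have hcall : ∀ i : Fin (N+1), cvec i = 0 := by
    intro i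
    refine Fin.lastCases hclast (fun i' => ?_) i
    exact congrFun hker i'
  have hfinal : ∀ i : Fin (N+1), pvec i = Vm.det * q i := by
    intro i
    have := hcall i
    rw [hcvec] at this
    linear_combination this
  rw [hPexp z]
  have hstep : ∀ i : Fin (N+1), pvec i * e (i:ℕ) z = Vm.det * (q i * e (i:ℕ) z) := by
    intro i
    rw [hfinal i]
    ring
  rw [Finset.sum_congr rfl fun i _ => hstep i, ← Finset.mul_sum, ← hQsum z]

lemma det_ne_zero_aux {s : ℕ} (kEnum : ℕ → Fin s → ℕ)
    (hbij : Function.Bijective kEnum)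
    (hmono : ∀ a b : ℕ, a < b → GradedLexLt (kEnum a) (kEnum b))
    (H : ℕ → Fin s → ℂ) (hH : ∀ n j, H n j = lejaDiskPoint (kEnum n j)) :
    ∀ N : ℕ, 1 ≤ N →
      (Matrix.of fun i j : Fin N => ∏ t, H (j:ℕ) t ^ kEnum (i:ℕ) t).det ≠ 0 := by
  intro N
  induction N with
  | zero => omega
  | succ N ih =>
    intro _
    rcases Nat.eq_zero_or_pos N with h0 | h0
    · subst h0
      rw [Matrix.det_fin_one]
      show (∏ t, H ((0 : Fin 1) : ℕ) t ^ kEnum ((0 : Fin 1) : ℕ) t) ≠ 0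
      refine Finset.prod_ne_zero_iff.2 fun t _ => ?_
      refine pow_ne_zero _ ?_
      rw [hH]
      exact eta_ne_zero _
    · have hdet := ih h0
      have hsnoc : (Fin.snoc (fun i : Fin N => H i) (H N) : Fin (N+1) → Fin s → ℂ)
          = fun j : Fin (N+1) => H (j:ℕ) := by
        funext j
        refine Fin.lastCases ?_ (fun j' => ?_) j
        · rw [Fin.snoc_last, Fin.val_last]
        · rw [Fin.snoc_castSucc, Fin.coe_castSucc]
      have hid := main_identity kEnum hbij hmono H hH h0 hdet (H N)
      rw [VDM, hsnoc] at hid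
      show (Matrix.of fun i j : Fin (N+1) => ∏ t, H (j:ℕ) t ^ kEnum (i:ℕ) t).det ≠ 0
      rw [hid]
      refine mul_ne_zero hdet ?_
      refine Finset.prod_ne_zero_iff.2 fun j _ => ?_
      refine Finset.prod_ne_zero_iff.2 fun l hl => ?_
      rw [hH]
      intro hzero
      have hlk : kEnum N j = l := eta_inj (sub_eq_zero.1 hzero)
      rw [Finset.mem_range] at hl
      omega

/-- the intertwining sequence of `s` copies of the explicit Leja sequence
for the closed unit disk is a Leja sequence for the closed unit polydisc `D̄^s`. -/
theorem statement5 {s : ℕ} (hs : 2 ≤ s)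
    (kEnum : ℕ → Fin s → ℕ) (hbij : Function.Bijective kEnum)
    (hmono : ∀ a b : ℕ, a < b → GradedLexLt (kEnum a) (kEnum b))
    (H : ℕ → Fin s → ℂ) (hH : ∀ n j, H n j = lejaDiskPoint (kEnum n j)) :
    IsLejaSeqMulti kEnum {z : Fin s → ℂ | ∀ j, ‖z j‖ ≤ 1} H := by
  have hmem : ∀ n, H n ∈ {z : Fin s → ℂ | ∀ j, ‖z j‖ ≤ 1} := by
    intro n j
    rw [hH]
    exact le_of_eq (abs_eta _)
  refine ⟨hmem, ?_, ?_⟩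
  · -- frontier
    rw [frontier_eq_closure_inter_closure]
    constructor
    · exact subset_closure (hmem 0)
    · rw [Metric.mem_closure_iff]
      intro ε hε
      have hj0 : (0 : ℕ) < s := by omega
      set j0 : Fin s := ⟨0, hj0⟩ with hj0def
      set b : Fin s → ℂ :=
        Function.update (H 0) j0 (((1 + ε/2 : ℝ) : ℂ) * H 0 j0) with hb
      refine ⟨b, ?_, ?_⟩
      · intro hbK
        have h1 := hbK j0
        rw [hb, Function.update_self] at h1
        rw [norm_mul] at h1
        rw [hH] at h1
        rw [abs_eta, mul_one, Complex.norm_real, Real.norm_eq_abs] at h1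
        rw [abs_of_pos (by linarith)] at h1
        linarith
      · rw [dist_pi_lt_iff hε]
        intro i
        by_cases hi : i = j0
        · rw [hi, hb, Function.update_self, Complex.dist_eq]
          have heq : H 0 j0 - ((1 + ε/2 : ℝ) : ℂ) * H 0 j0 = -((ε/2 : ℝ) : ℂ) * H 0 j0 := by
            push_cast
            ring
          rw [heq, norm_mul, norm_neg, Complex.norm_real, Real.norm_eq_abs]
          rw [hH, abs_eta, mul_one, abs_of_pos (by linarith)]
          linarith
        · rw [hb, Function.update_of_ne hi]
          simpa using hε
  · -- Leja property
    intro N hN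
    have hdet := det_ne_zero_aux kEnum hbij hmono H hH N hN
    have hid := fun z => main_identity kEnum hbij hmono H hH hN hdet z
    constructor
    · exact ⟨H N, hmem N, rfl⟩
    · rintro v ⟨z, hz, rfl⟩
      simp only []
      rw [hid z, hid (H N), norm_mul, norm_mul]
      refine mul_le_mul_of_nonneg_left ?_ (norm_nonneg _)
      rw [norm_prod, norm_prod]
      refine Finset.prod_le_prod (fun j _ => norm_nonneg _) fun j _ => ?_
      rw [norm_prod, norm_prod]
      have hzj : ‖z j‖ ≤ 1 := hz j
      have := leja_uni (kEnum N j) (z j) hzj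
      calc ∏ l ∈ range (kEnum N j), ‖z j - lejaDiskPoint l‖
          ≤ ∏ l ∈ range (kEnum N j),
              ‖lejaDiskPoint (kEnum N j) - lejaDiskPoint l‖ := this
        _ = ∏ l ∈ range (kEnum N j), ‖H N j - lejaDiskPoint l‖ := by
            rw [hH]
end

section
/- Let (η_i)_{i≥0} and (θ_j)_{j≥0} be two sequences of pairwise distinct complex numbers and let (H_n)_{n≥1} be their intertwining sequence in ℂ². Then for every d ≥ 0, VDM(H_1,…,H_{N_d}) = VDM((η_0,θ_0),(η_0,θ_1),(η_1,θ_0),…,(η_{d−1},θ_0),(η_0,θ_d),…,(η_d,θ_0)) = ∏_{j=1}^{d} [VDM(η_0,…,η_j) × VDM(θ_0,…,θ_j)], where VDM(η_0,…,η_j) = ∏_{0 ≤ i < i' ≤ j} (η_{i'} − η_i) is the one-dimensional Vandermonde determinant (the Schiffer–Siciak formula). -/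
open Finset

/-- Graded lexicographic strict order on `ℕ²`. -/
def GradedLexLt2 (k l : ℕ × ℕ) : Prop :=
  k.1 + k.2 < l.1 + l.2 ∨
    (k.1 + k.2 = l.1 + l.2 ∧ (k.1 < l.1 ∨ (k.1 = l.1 ∧ k.2 < l.2)))

/-- Generalized bidimensional Vandermonde determinant `det [e_i(G_j)]`, where
`e_n(z,w) = z^{k(n)} w^{l(n)}` with `(k(n), l(n)) = kEnum n`. -/
noncomputable def VDM2 (kEnum : ℕ → ℕ × ℕ) {N : ℕ} (G : Fin N → ℂ × ℂ) : ℂ :=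
  Matrix.det (Matrix.of fun i j : Fin N =>
    (G j).1 ^ (kEnum (i : ℕ)).1 * (G j).2 ^ (kEnum (i : ℕ)).2)

namespace Statement6Aux
open Polynomial

def Sdset (d : ℕ) : Finset (ℕ × ℕ) :=
  (range (d + 1) ×ˢ range (d + 1)).filter fun p => p.1 + p.2 ≤ d

lemma mem_Sdset {d : ℕ} {p : ℕ × ℕ} : p ∈ Sdset d ↔ p.1 + p.2 ≤ d := by
  simp only [Sdset, mem_filter, mem_product, mem_range]
  omega

lemma Sdset_succ (d : ℕ) :
    Sdset (d + 1) = Sdset d ∪ (range (d + 2)).image fun k => (k, d + 1 - k) := by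
  ext p
  simp only [mem_Sdset, mem_union, mem_image, mem_range, Prod.ext_iff]
  constructor
  · intro h
    rcases le_or_gt (p.1 + p.2) d with h' | h'
    · exact Or.inl h'
    · exact Or.inr ⟨p.1, by omega, rfl, by omega⟩
  · rintro (h | ⟨k, hk, h1, h2⟩) <;> omega

lemma disj_Sdset (d : ℕ) :
    Disjoint (Sdset d) ((range (d + 2)).image fun k => (k, d + 1 - k)) := by
  rw [Finset.disjoint_left]
  rintro p hp hp2
  rw [mem_Sdset] at hp
  simp only [mem_image, mem_range, Prod.ext_iff] at hp2
  obtain ⟨k, hk, h1, h2⟩ := hp2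
  omega

lemma inj_diag (d : ℕ) :
    ∀ x ∈ range (d + 2), ∀ y ∈ range (d + 2),
      (fun k => (k, d + 1 - k)) x = (fun k => (k, d + 1 - k)) y → x = y := by
  intro x _ y _ h
  exact congrArg Prod.fst h

lemma Sdset_zero : Sdset 0 = {((0 : ℕ), (0 : ℕ))} := by
  ext p
  simp only [mem_Sdset, mem_singleton, Prod.ext_iff]
  omega

lemma card_Sdset (d : ℕ) : (Sdset d).card = (d + 1) * (d + 2) / 2 := by
  induction d with
  | zero => rw [Sdset_zero]; rfl
  | succ d ih =>
    rw [Sdset_succ, card_union_of_disjoint (disj_Sdset d), ih,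
      Finset.card_image_of_injOn (inj_diag d), card_range]
    have h1 : (d + 1 + 1) * (d + 1 + 2) = (d + 1) * (d + 2) + 2 * (d + 2) := by ring
    omega

lemma downclosed_eq_range (T : Finset ℕ) (h : ∀ m n : ℕ, m < n → n ∈ T → m ∈ T) :
    T = range T.card := by
  ext x
  rw [mem_range]
  constructor
  · intro hx
    have hsub : range (x + 1) ⊆ T := by
      intro y hy
      rw [mem_range] at hy
      rcases eq_or_lt_of_le (Nat.lt_succ_iff.1 hy) with rfl | hlt
      · exact hx
      · exact h y x hlt hx
    have := Finset.card_le_card hsub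
    rw [card_range] at this
    omega
  · intro hx
    by_contra hmem
    have hsub : T ⊆ range x := by
      intro n hn
      rw [mem_range]
      by_contra hxn
      rcases eq_or_lt_of_le (Nat.le_of_not_lt hxn) with rfl | hlt
      · exact hmem hn
      · exact hmem (h x n hlt hn)
    have := Finset.card_le_card hsub
    rw [card_range] at this
    omega

lemma kEnum_image (kEnum : ℕ → ℕ × ℕ) (hbij : Function.Bijective kEnum)
    (hmono : ∀ a b : ℕ, a < b → GradedLexLt2 (kEnum a) (kEnum b)) (d : ℕ) :
    (range ((d + 1) * (d + 2) / 2)).image kEnum = Sdset d := by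
  classical
  set T := (Sdset d).preimage kEnum hbij.1.injOn with hT
  have hTmem : ∀ n, n ∈ T ↔ kEnum n ∈ Sdset d := fun n => Finset.mem_preimage
  have hdc : ∀ m n : ℕ, m < n → n ∈ T → m ∈ T := by
    intro m n hmn hn
    rw [hTmem] at hn ⊢
    have hg := hmono m n hmn
    rw [mem_Sdset] at hn ⊢
    unfold GradedLexLt2 at hg
    omega
  have himg : T.image kEnum = Sdset d := by
    ext p
    simp only [mem_image]
    constructor
    · rintro ⟨n, hn, rfl⟩
      exact (hTmem n).1 hn
    · intro hp
      obtain ⟨n, rfl⟩ := hbij.2 p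
      exact ⟨n, (hTmem n).2 hp, rfl⟩
  have hcard : T.card = (d + 1) * (d + 2) / 2 := by
    rw [← card_Sdset d, ← himg, Finset.card_image_of_injective _ hbij.1]
  rw [← himg, downclosed_eq_range T hdc, hcard]



noncomputable def Newt (f : ℕ → ℂ) (a : ℕ) : Polynomial ℂ :=
  ∏ t ∈ range a, (X - C (f t))

lemma Newt_natDegree (f : ℕ → ℂ) (a : ℕ) : (Newt f a).natDegree = a := by
  rw [Newt, natDegree_prod _ _ fun i _ => X_sub_C_ne_zero (f i)]
  simp

lemma Newt_monic (f : ℕ → ℂ) (a : ℕ) : (Newt f a).Monic :=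
  monic_prod_of_monic _ _ fun t _ => monic_X_sub_C (f t)

lemma Newt_coeff_top (f : ℕ → ℂ) (a : ℕ) : (Newt f a).coeff a = 1 := by
  have := (Newt_monic f a).coeff_natDegree
  rwa [Newt_natDegree] at this

lemma Newt_coeff_hi (f : ℕ → ℂ) {a a' : ℕ} (h : a < a') : (Newt f a).coeff a' = 0 :=
  coeff_eq_zero_of_natDegree_lt (by rwa [Newt_natDegree])

lemma Newt_eval (f : ℕ → ℂ) (a : ℕ) (x : ℂ) :
    (Newt f a).eval x = ∏ t ∈ range a, (x - f t) := by
  simp [Newt, eval_prod]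

lemma Newt_eval_zero (f : ℕ → ℂ) {a k : ℕ} (h : k < a) : (Newt f a).eval (f k) = 0 := by
  rw [Newt_eval]
  exact Finset.prod_eq_zero (mem_range.2 h) (sub_self _)

lemma Newt_eval_eq_sum (f : ℕ → ℂ) (a : ℕ) (x : ℂ) :
    (Newt f a).eval x = ∑ a' ∈ range (a + 1), (Newt f a).coeff a' * x ^ a' := by
  rw [eval_eq_sum_range, Newt_natDegree]


lemma prod_Sdset (u v : ℕ → ℂ) (hu : u 0 = 1) (hv : v 0 = 1) (d : ℕ) :
    ∏ p ∈ Sdset d, (u p.1 * v p.2) =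
      ∏ j ∈ range d, ((∏ p ∈ range (j + 2), u p) * (∏ p ∈ range (j + 2), v p)) := by
  induction d with
  | zero => rw [Sdset_zero]; simp [hu, hv]
  | succ d ih =>
    rw [Sdset_succ, Finset.prod_union (disj_Sdset d), ih,
      Finset.prod_image (inj_diag d)]
    conv_rhs => rw [prod_range_succ]
    congr 1
    rw [Finset.prod_mul_distrib]
    congr 1
    rw [← Finset.prod_range_reflect v (d + 2)]
    apply Finset.prod_congr rfl
    intro x hx
    congr 1

end Statement6Aux

/-- Schiffer–Siciak formula: for the intertwining sequence of two
pairwise distinct sequences, `VDM(H_1,…,H_{N_d}) = ∏_{j=1}^{d} [VDM(η_0,…,η_j) ×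
VDM(θ_0,…,θ_j)]`, where `VDM(η_0,…,η_j) = ∏_{0 ≤ i < i' ≤ j} (η_{i'} − η_i)`.
Here `kEnum n` stands for the paper's `k(n+1)` and `H n` for `H_{n+1}`. -/
theorem statement6
    (kEnum : ℕ → ℕ × ℕ) (hbij : Function.Bijective kEnum)
    (hmono : ∀ a b : ℕ, a < b → GradedLexLt2 (kEnum a) (kEnum b))
    (η θ : ℕ → ℂ) (hη : Function.Injective η) (hθ : Function.Injective θ)
    (H : ℕ → ℂ × ℂ) (hH : ∀ n, H n = (η (kEnum n).1, θ (kEnum n).2)) :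
    ∀ d : ℕ,
      VDM2 kEnum (fun i : Fin ((d + 1) * (d + 2) / 2) => H i) =
        ∏ j ∈ range d,
          ((∏ p ∈ range (j + 2), ∏ i ∈ range p, (η p - η i)) *
            (∏ p ∈ range (j + 2), ∏ i ∈ range p, (θ p - θ i))) := by
  classical
  intro d
  set N : ℕ := (d + 1) * (d + 2) / 2 with hNdef
  have himg : (range N).image kEnum = Statement6Aux.Sdset d :=
    Statement6Aux.kEnum_image kEnum hbij hmono d
  have hmemS : ∀ i : Fin N, (kEnum (i : ℕ)).1 + (kEnum (i : ℕ)).2 ≤ d := by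
    intro i
    have : kEnum (i : ℕ) ∈ Statement6Aux.Sdset d := by
      rw [← himg]; exact mem_image_of_mem kEnum (mem_range.2 i.isLt)
    exact Statement6Aux.mem_Sdset.1 this
  set A : Matrix (Fin N) (Fin N) ℂ :=
    Matrix.of (fun i j : Fin N =>
      η (kEnum (j : ℕ)).1 ^ (kEnum (i : ℕ)).1 * θ (kEnum (j : ℕ)).2 ^ (kEnum (i : ℕ)).2)
    with hA
  set Tm : Matrix (Fin N) (Fin N) ℂ :=
    Matrix.of (fun i i' : Fin N =>
      (Statement6Aux.Newt η (kEnum (i : ℕ)).1).coeff (kEnum (i' : ℕ)).1 *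
        (Statement6Aux.Newt θ (kEnum (i : ℕ)).2).coeff (kEnum (i' : ℕ)).2)
    with hTm
  set Cm : Matrix (Fin N) (Fin N) ℂ :=
    Matrix.of (fun i j : Fin N =>
      (Statement6Aux.Newt η (kEnum (i : ℕ)).1).eval (η (kEnum (j : ℕ)).1) *
        (Statement6Aux.Newt θ (kEnum (i : ℕ)).2).eval (θ (kEnum (j : ℕ)).2))
    with hCm
  have step1 : VDM2 kEnum (fun i : Fin N => H (i : ℕ)) = A.det := by
    unfold VDM2
    congr 1
    ext i j
    simp [hA, hH]
  have hmul : Tm * A = Cm := by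
    ext i j
    rw [Matrix.mul_apply]
    set a := (kEnum (i : ℕ)).1 with ha
    set b := (kEnum (i : ℕ)).2 with hb
    set k := (kEnum (j : ℕ)).1 with hk
    set l := (kEnum (j : ℕ)).2 with hl
    set G : ℕ × ℕ → ℂ := fun p =>
      ((Statement6Aux.Newt η a).coeff p.1 * η k ^ p.1) *
        ((Statement6Aux.Newt θ b).coeff p.2 * θ l ^ p.2) with hG
    have e1 : ∀ i' : Fin N, Tm i i' * A i' j = G (kEnum (i' : ℕ)) := by
      intro i'
      simp only [hG, hTm, hA, Matrix.of_apply]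
      ring
    rw [Finset.sum_congr rfl fun i' _ => e1 i',
      Fin.sum_univ_eq_sum_range (fun n => G (kEnum n)) N,
      ← Finset.sum_image (f := G) (fun x _ y _ h => hbij.1 h), himg]
    have hsub : range (a + 1) ×ˢ range (b + 1) ⊆ Statement6Aux.Sdset d := by
      intro p hp
      rw [mem_product, mem_range, mem_range] at hp
      rw [Statement6Aux.mem_Sdset]
      have := hmemS i
      omega
    have hvan : ∀ p ∈ Statement6Aux.Sdset d, p ∉ range (a + 1) ×ˢ range (b + 1) →
        G p = 0 := by
      intro p _ hp
      rw [mem_product, mem_range, mem_range] at hp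
      simp only [hG]
      rcases Nat.lt_or_ge p.1 (a + 1) with h1 | h1
      · have h2 : b < p.2 := by omega
        rw [Statement6Aux.Newt_coeff_hi θ h2]
        ring
      · have h1' : a < p.1 := by omega
        rw [Statement6Aux.Newt_coeff_hi η h1']
        ring
    rw [← Finset.sum_subset hsub hvan, Finset.sum_product]
    simp only [hG]
    rw [← Finset.sum_mul_sum (range (a + 1)) (range (b + 1))
        (fun x => (Statement6Aux.Newt η a).coeff x * η k ^ x)
        (fun y => (Statement6Aux.Newt θ b).coeff y * θ l ^ y),
      ← Statement6Aux.Newt_eval_eq_sum η a (η k),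
      ← Statement6Aux.Newt_eval_eq_sum θ b (θ l)]
    simp [hCm]
    rfl
  have hdetT : Tm.det = 1 := by
    have htri : Tm.BlockTriangular OrderDual.toDual := by
      intro i i' h
      have hlt : (i : ℕ) < (i' : ℕ) := h
      have hg := hmono (i : ℕ) (i' : ℕ) hlt
      unfold GradedLexLt2 at hg
      simp only [hTm, Matrix.of_apply]
      rcases Nat.lt_or_ge (kEnum (i : ℕ)).1 (kEnum (i' : ℕ)).1 with hc | hc
      · rw [Statement6Aux.Newt_coeff_hi η hc, zero_mul]
      · have hc2 : (kEnum (i : ℕ)).2 < (kEnum (i' : ℕ)).2 := by omega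
        rw [Statement6Aux.Newt_coeff_hi θ hc2, mul_zero]
    rw [Matrix.det_of_lowerTriangular Tm htri]
    apply Finset.prod_eq_one
    intro i _
    simp [hTm, Statement6Aux.Newt_coeff_top]
  have htriC : Cm.BlockTriangular id := by
    intro i j h
    have hlt : (j : ℕ) < (i : ℕ) := h
    have hg := hmono (j : ℕ) (i : ℕ) hlt
    unfold GradedLexLt2 at hg
    simp only [hCm, Matrix.of_apply]
    rcases Nat.lt_or_ge (kEnum (j : ℕ)).1 (kEnum (i : ℕ)).1 with hc | hc
    · rw [Statement6Aux.Newt_eval_zero η hc, zero_mul]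
    · have hc2 : (kEnum (j : ℕ)).2 < (kEnum (i : ℕ)).2 := by omega
      rw [Statement6Aux.Newt_eval_zero θ hc2, mul_zero]
  have hdetA : A.det = ∏ i : Fin N, Cm i i := by
    have : Cm.det = Tm.det * A.det := by rw [← hmul, Matrix.det_mul]
    rw [← Matrix.det_of_upperTriangular htriC, this, hdetT, one_mul]
  rw [step1, hdetA]
  have hdiag : ∀ i : Fin N, Cm i i =
      (∏ t ∈ range (kEnum (i : ℕ)).1, (η (kEnum (i : ℕ)).1 - η t)) *
        ∏ t ∈ range (kEnum (i : ℕ)).2, (θ (kEnum (i : ℕ)).2 - θ t) := by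
    intro i
    simp [hCm, Statement6Aux.Newt_eval]
  rw [Finset.prod_congr rfl fun i _ => hdiag i]
  rw [Fin.prod_univ_eq_prod_range (fun n =>
      (∏ t ∈ range (kEnum n).1, (η (kEnum n).1 - η t)) *
        ∏ t ∈ range (kEnum n).2, (θ (kEnum n).2 - θ t)) N]
  rw [← Finset.prod_image (f := fun p : ℕ × ℕ =>
      (∏ t ∈ range p.1, (η p.1 - η t)) * ∏ t ∈ range p.2, (θ p.2 - θ t))
    (fun x _ y _ h => hbij.1 h), himg]
  exact Statement6Aux.prod_Sdset (fun p => ∏ t ∈ range p, (η p - η t))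
    (fun p => ∏ t ∈ range p, (θ p - θ t)) (by simp) (by simp) d
end

section
/- There exists a Leja sequence (H_n)_{n≥1} for the closed unit bidisc D̄² ⊂ ℂ² that cannot be written as the intertwining sequence of any two complex sequences; moreover, neither of its two coordinate sequences is a Leja sequence for the closed unit disk. In fact, any Leja sequence for D̄² beginning with H_1 = (1,1), H_2 = (−1,−1), H_3 = (e^{iπ/4}, −e^{iπ/4}) has these properties. -/
open Finset

/-- A Leja sequence for a compact set `K ⊂ ℂ²`; `G n` is the paper's `H_{n+1}`. -/
def IsLejaSeq2 (kEnum : ℕ → ℕ × ℕ) (K : Set (ℂ × ℂ)) (G : ℕ → ℂ × ℂ) : Prop :=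
  (∀ n, G n ∈ K) ∧ G 0 ∈ frontier K ∧
    ∀ N : ℕ, 1 ≤ N →
      IsGreatest
        ((fun z => ‖VDM2 kEnum (Fin.snoc (fun i : Fin N => G i) z)‖) '' K)
        ‖VDM2 kEnum (Fin.snoc (fun i : Fin N => G i) (G N))‖

/-- A (one-dimensional) Leja sequence for the closed unit disk. -/
def IsLejaDisk (η : ℕ → ℂ) : Prop :=
  (∀ n, ‖η n‖ ≤ 1) ∧ ‖η 0‖ = 1 ∧
    ∀ k : ℕ, 1 ≤ k →
      IsGreatest
        ((fun z => ∏ i ∈ range k, ‖z - η i‖) '' {z : ℂ | ‖z‖ ≤ 1})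
        (∏ i ∈ range k, ‖η k - η i‖)

/-- The closed unit bidisc. -/
def Bidisc : Set (ℂ × ℂ) := {p | ‖p.1‖ ≤ 1 ∧ ‖p.2‖ ≤ 1}

lemma bidisc_eq : Bidisc = Metric.closedBall (0 : ℂ × ℂ) 1 := by
  ext p
  simp [Bidisc, Prod.norm_def, max_le_iff]

lemma isCompact_bidisc : IsCompact Bidisc := by
  rw [bidisc_eq]; exact isCompact_closedBall _ _

lemma contVDM (kEnum : ℕ → ℕ × ℕ) {n : ℕ} (v : Fin n → ℂ × ℂ) :
    Continuous fun z : ℂ × ℂ => VDM2 kEnum (Fin.snoc v z) := by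
  unfold VDM2
  apply Continuous.matrix_det
  apply continuous_matrix
  intro i j
  refine Fin.lastCases ?_ ?_ j
  · simp only [Matrix.of_apply, Fin.snoc_last]
    exact ((continuous_fst.pow _).mul (continuous_snd.pow _))
  · intro k
    simp only [Matrix.of_apply, Fin.snoc_castSucc]
    exact continuous_const

lemma exists_max (kEnum : ℕ → ℕ × ℕ) {n : ℕ} (v : Fin n → ℂ × ℂ) :
    ∃ p, p ∈ Bidisc ∧ ∀ q ∈ Bidisc,
      ‖VDM2 kEnum (Fin.snoc v q)‖ ≤ ‖VDM2 kEnum (Fin.snoc v p)‖ := by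
  obtain ⟨p, hp, hmax⟩ := isCompact_bidisc.exists_isMaxOn ⟨(0,0), by norm_num [Bidisc]⟩
    ((continuous_norm.comp (contVDM kEnum v)).continuousOn)
  exact ⟨p, hp, fun q hq => hmax hq⟩

noncomputable def nextPt (kEnum : ℕ → ℕ × ℕ) {n : ℕ} (v : Fin n → ℂ × ℂ) : ℂ × ℂ :=
  if n = 0 then (1, 1)
  else if n = 1 then (-1, -1)
  else if n = 2 then
    (Complex.exp ((Real.pi : ℂ) * Complex.I / 4),
     -Complex.exp ((Real.pi : ℂ) * Complex.I / 4))
  else Classical.choose (exists_max kEnum v)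

noncomputable def lejaTup (kEnum : ℕ → ℕ × ℕ) : (n : ℕ) → Fin n → ℂ × ℂ
  | 0 => Fin.elim0
  | (n + 1) => Fin.snoc (lejaTup kEnum n) (nextPt kEnum (lejaTup kEnum n))

noncomputable def lejaSeq (kEnum : ℕ → ℕ × ℕ) (n : ℕ) : ℂ × ℂ :=
  lejaTup kEnum (n + 1) (Fin.last n)

lemma lejaSeq_eq (kEnum : ℕ → ℕ × ℕ) (n : ℕ) :
    lejaSeq kEnum n = nextPt kEnum (lejaTup kEnum n) := by
  simp [lejaSeq, lejaTup]

lemma lejaTup_eq (kEnum : ℕ → ℕ × ℕ) : ∀ n (i : Fin n),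
    lejaTup kEnum n i = lejaSeq kEnum i := by
  intro n
  induction n with
  | zero => exact fun i => i.elim0
  | succ n ih =>
    intro i
    refine Fin.lastCases ?_ ?_ i
    · simp only [Fin.val_last]
      rfl
    · intro k
      have h1 : lejaTup kEnum (n+1) k.castSucc = lejaTup kEnum n k := by
        simp [lejaTup]
      rw [h1, ih k, Fin.coe_castSucc]

lemma lejaTup_eq' (kEnum : ℕ → ℕ × ℕ) (n : ℕ) :
    (fun i : Fin n => lejaSeq kEnum i) = lejaTup kEnum n := by
  funext i; rw [lejaTup_eq]

section kvals
variable (kEnum : ℕ → ℕ × ℕ) (hbij : Function.Bijective kEnum)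
  (hmono : ∀ a b : ℕ, a < b → GradedLexLt2 (kEnum a) (kEnum b))

include hbij hmono

lemma kEnum0 : kEnum 0 = (0, 0) := by
  obtain ⟨m, hm⟩ := hbij.2 (0, 0)
  rcases Nat.eq_zero_or_pos m with h | h
  · rwa [h] at hm
  · exfalso
    have := hmono 0 m h
    rw [hm] at this
    rcases this with h1 | ⟨h1, h2 | ⟨h2, h3⟩⟩ <;> omega

lemma kEnum1 : kEnum 1 = (0, 1) := by
  obtain ⟨m, hm⟩ := hbij.2 (0, 1)
  have hm0 : m ≠ 0 := by
    intro h; rw [h, kEnum0 kEnum hbij hmono] at hm; exact absurd hm (by decide)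
  rcases Nat.lt_or_ge m 2 with h | h
  · interval_cases m <;> simp_all
  · exfalso
    have h1 := hmono 0 1 (by norm_num)
    have h2 := hmono 1 m (by omega)
    rw [kEnum0 kEnum hbij hmono] at h1
    rw [hm] at h2
    obtain ⟨a, b⟩ := kEnum 1
    simp only [GradedLexLt2] at h1 h2
    omega

lemma kEnum2 : kEnum 2 = (1, 0) := by
  obtain ⟨m, hm⟩ := hbij.2 (1, 0)
  have hm0 : m ≠ 0 := by
    intro h; rw [h, kEnum0 kEnum hbij hmono] at hm; exact absurd hm (by decide)
  have hm1 : m ≠ 1 := by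
    intro h; rw [h, kEnum1 kEnum hbij hmono] at hm; exact absurd hm (by decide)
  rcases Nat.lt_or_ge m 3 with h | h
  · interval_cases m <;> simp_all
  · exfalso
    have h1 := hmono 1 2 (by norm_num)
    have h2 := hmono 2 m (by omega)
    rw [kEnum1 kEnum hbij hmono] at h1
    rw [hm] at h2
    obtain ⟨a, b⟩ := kEnum 2
    simp only [GradedLexLt2] at h1 h2
    omega

end kvals

lemma vdm2_one (kEnum : ℕ → ℕ × ℕ) (h0 : kEnum 0 = (0, 0)) (h1 : kEnum 1 = (0, 1))
    (v : Fin 1 → ℂ × ℂ) (hv : v 0 = (1, 1)) (z : ℂ × ℂ) :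
    VDM2 kEnum (Fin.snoc v z) = z.2 - 1 := by
  rw [VDM2, Matrix.det_fin_two]
  have e0 : (Fin.snoc v z : Fin 2 → ℂ × ℂ) 0 = (1, 1) := by
    rw [show (0 : Fin 2) = Fin.castSucc 0 by rfl, Fin.snoc_castSucc, hv]
  have e1 : (Fin.snoc v z : Fin 2 → ℂ × ℂ) 1 = z := by
    rw [show (1 : Fin 2) = Fin.last 1 by rfl, Fin.snoc_last]
  simp [Matrix.of_apply, e0, e1, h0, h1]

lemma vdm2_two (kEnum : ℕ → ℕ × ℕ) (h0 : kEnum 0 = (0, 0)) (h1 : kEnum 1 = (0, 1))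
    (h2 : kEnum 2 = (1, 0))
    (v : Fin 2 → ℂ × ℂ) (hv0 : v 0 = (1, 1)) (hv1 : v 1 = (-1, -1)) (z : ℂ × ℂ) :
    VDM2 kEnum (Fin.snoc v z) = 2 * (z.2 - z.1) := by
  rw [VDM2, Matrix.det_fin_three]
  have e0 : (Fin.snoc v z : Fin 3 → ℂ × ℂ) 0 = (1, 1) := by
    rw [show (0 : Fin 3) = Fin.castSucc 0 by rfl, Fin.snoc_castSucc, hv0]
  have e1 : (Fin.snoc v z : Fin 3 → ℂ × ℂ) 1 = (-1, -1) := by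
    rw [show (1 : Fin 3) = Fin.castSucc 1 by rfl, Fin.snoc_castSucc, hv1]
  have e2 : (Fin.snoc v z : Fin 3 → ℂ × ℂ) 2 = z := by
    rw [show (2 : Fin 3) = Fin.last 2 by rfl, Fin.snoc_last]
  simp only [Matrix.of_apply, e0, e1, e2, Fin.val_zero, Fin.val_one, Fin.val_two,
    h0, h1, h2, pow_zero, pow_one]
  norm_num
  ring

lemma prod_two (η : ℕ → ℂ) (z : ℂ) (h0 : η 0 = 1) (h1 : η 1 = -1) :
    ∏ i ∈ range 2, ‖z - η i‖ = ‖z * z - 1‖ := by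
  rw [show (2 : ℕ) = 1 + 1 by rfl, prod_range_succ, prod_range_one, h0, h1,
    ← norm_mul]
  congr 1
  ring

lemma notLejaDisk (η : ℕ → ℂ) (h0 : η 0 = 1) (h1 : η 1 = -1)
    (h2 : η 2 * η 2 = Complex.I) : ¬ IsLejaDisk η := by
  rintro ⟨_, _, hg⟩
  have hG := hg 2 (by norm_num)
  have hval : ∏ i ∈ range 2, ‖η 2 - η i‖ = Real.sqrt 2 := by
    rw [prod_two η (η 2) h0 h1, h2]
    simp [Complex.norm_def, Complex.normSq_apply]
    norm_num
  have hub := hG.2 ⟨Complex.I, by simp, rfl⟩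
  simp only at hub
  rw [hval, prod_two η Complex.I h0 h1, Complex.I_mul_I] at hub
  have h2' : ‖(-1 - 1 : ℂ)‖ = 2 := by
    norm_num
  rw [h2'] at hub
  nlinarith [Real.sq_sqrt (by norm_num : (2:ℝ) ≥ 0), Real.sqrt_nonneg 2]

lemma nonInter (kEnum : ℕ → ℕ × ℕ) (h0k : kEnum 0 = (0, 0)) (h1k : kEnum 1 = (0, 1))
    (G : ℕ → ℂ × ℂ) (hG0 : G 0 = (1, 1)) (hG1 : G 1 = (-1, -1)) :
    ¬ ∃ η θ : ℕ → ℂ, ∀ n, G n = (η (kEnum n).1, θ (kEnum n).2) := by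
  rintro ⟨η, θ, h⟩
  have e0 := h 0
  have e1 := h 1
  rw [hG0, h0k] at e0
  rw [hG1, h1k] at e1
  have a0 : η 0 = 1 := (Prod.mk.injEq _ _ _ _ ▸ e0.symm).1
  have a1 : η 0 = -1 := (Prod.mk.injEq _ _ _ _ ▸ e1.symm).1
  rw [a0] at a1
  norm_num at a1

noncomputable def omg : ℂ := Complex.exp ((Real.pi : ℂ) * Complex.I / 4)

lemma abs_omg : ‖omg‖ = 1 := by
  rw [omg, Complex.norm_exp]
  simp

lemma omg_sq : omg * omg = Complex.I := by
  rw [omg, ← Complex.exp_add]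
  have : (Real.pi : ℂ) * Complex.I / 4 + (Real.pi : ℂ) * Complex.I / 4
      = ((Real.pi / 2 : ℝ) : ℂ) * Complex.I := by
    push_cast; ring
  rw [this, Complex.exp_mul_I, ← Complex.ofReal_cos, ← Complex.ofReal_sin,
    Real.cos_pi_div_two, Real.sin_pi_div_two]
  simp

lemma frontier11 : ((1 : ℂ), (1 : ℂ)) ∈ frontier Bidisc := by
  rw [frontier]
  refine ⟨subset_closure ⟨by norm_num, by norm_num⟩, ?_⟩
  intro h
  rw [mem_interior_iff_mem_nhds, Metric.mem_nhds_iff] at h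
  obtain ⟨ε, hε, hball⟩ := h
  have hq : (((1 + ε / 2 : ℝ) : ℂ), (1 : ℂ)) ∈ Metric.ball ((1 : ℂ), (1 : ℂ)) ε := by
    rw [Metric.mem_ball, Prod.dist_eq]
    simp only [dist_self]
    rw [Complex.dist_eq]
    have : ((1 + ε / 2 : ℝ) : ℂ) - 1 = ((ε / 2 : ℝ) : ℂ) := by push_cast; ring
    rw [this, Complex.norm_real, Real.norm_eq_abs]
    rw [abs_of_pos (by linarith)]
    simp only [max_le_iff, sup_lt_iff]
    constructor <;> linarith
  have := (hball hq).1
  rw [Complex.norm_real, Real.norm_eq_abs, abs_of_pos (by linarith)] at this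
  linarith

lemma lejaSeq0 (kEnum : ℕ → ℕ × ℕ) : lejaSeq kEnum 0 = (1, 1) := by
  rw [lejaSeq_eq]; rfl

lemma lejaSeq1 (kEnum : ℕ → ℕ × ℕ) : lejaSeq kEnum 1 = (-1, -1) := by
  rw [lejaSeq_eq]; rfl

lemma lejaSeq2 (kEnum : ℕ → ℕ × ℕ) : lejaSeq kEnum 2 = (omg, -omg) := by
  rw [lejaSeq_eq]; rfl

lemma lejaSeq_big (kEnum : ℕ → ℕ × ℕ) {n : ℕ} (hn : 3 ≤ n) :
    lejaSeq kEnum n = Classical.choose (exists_max kEnum (lejaTup kEnum n)) := by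
  rw [lejaSeq_eq, nextPt, if_neg (by omega), if_neg (by omega), if_neg (by omega)]

lemma lejaSeq_mem (kEnum : ℕ → ℕ × ℕ) (n : ℕ) : lejaSeq kEnum n ∈ Bidisc := by
  rcases Nat.lt_or_ge n 3 with h | h
  · interval_cases n
    · rw [lejaSeq0]; exact ⟨by norm_num, by norm_num⟩
    · rw [lejaSeq1]; constructor <;> simp
    · rw [lejaSeq2]
      refine ⟨le_of_eq abs_omg, ?_⟩
      show ‖-omg‖ ≤ 1
      rw [norm_neg, abs_omg]
  · rw [lejaSeq_big kEnum h]
    exact (Classical.choose_spec (exists_max kEnum (lejaTup kEnum n))).1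

lemma leja_isLeja (kEnum : ℕ → ℕ × ℕ)
    (h0 : kEnum 0 = (0, 0)) (h1 : kEnum 1 = (0, 1)) (h2 : kEnum 2 = (1, 0)) :
    (∀ n, lejaSeq kEnum n ∈ Bidisc) ∧ lejaSeq kEnum 0 ∈ frontier Bidisc ∧
    ∀ N : ℕ, 1 ≤ N →
      IsGreatest
        ((fun z => ‖VDM2 kEnum
            (Fin.snoc (fun i : Fin N => lejaSeq kEnum i) z)‖) '' Bidisc)
        (‖VDM2 kEnum
            (Fin.snoc (fun i : Fin N => lejaSeq kEnum i) (lejaSeq kEnum N))‖) := by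
  refine ⟨lejaSeq_mem kEnum, by rw [lejaSeq0]; exact frontier11, ?_⟩
  intro N hN
  rw [lejaTup_eq' kEnum N]
  have hv0 : ∀ {M : ℕ} (h : 0 < M), lejaTup kEnum M ⟨0, h⟩ = (1, 1) := by
    intro M h; rw [lejaTup_eq]; exact lejaSeq0 kEnum
  rcases Nat.lt_or_ge N 3 with hN3 | hN3
  · interval_cases N
    · -- N = 1
      have key : ∀ z : ℂ × ℂ, VDM2 kEnum (Fin.snoc (lejaTup kEnum 1) z) = z.2 - 1 :=
        vdm2_one kEnum h0 h1 (lejaTup kEnum 1) (hv0 (by norm_num))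
      constructor
      · exact ⟨lejaSeq kEnum 1, lejaSeq_mem kEnum 1, rfl⟩
      · rintro y ⟨z, hz, rfl⟩
        simp only [key, lejaSeq1]
        have hb : ‖z.2 - 1‖ ≤ ‖z.2‖ + 1 := by
          simpa [sub_eq_add_neg] using norm_add_le z.2 (-1)
        have : ‖(-1 : ℂ) - 1‖ = 2 := by norm_num
        rw [this]
        have := hz.2
        linarith
    · -- N = 2
      have hv1 : lejaTup kEnum 2 1 = (-1, -1) := by
        rw [lejaTup_eq]; exact lejaSeq1 kEnum
      have key : ∀ z : ℂ × ℂ, VDM2 kEnum (Fin.snoc (lejaTup kEnum 2) z)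
          = 2 * (z.2 - z.1) :=
        vdm2_two kEnum h0 h1 h2 (lejaTup kEnum 2) (hv0 (by norm_num)) hv1
      constructor
      · exact ⟨lejaSeq kEnum 2, lejaSeq_mem kEnum 2, rfl⟩
      · rintro y ⟨z, hz, rfl⟩
        simp only [key, lejaSeq2]
        rw [norm_mul, norm_mul]
        have hR : ‖(-omg : ℂ) - omg‖ = 2 := by
          have : (-omg : ℂ) - omg = (-2) * omg := by ring
          rw [this, norm_mul, abs_omg]
          norm_num
        rw [hR]
        have hb : ‖z.2 - z.1‖ ≤ ‖z.2‖ + ‖z.1‖ := by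
          simpa [sub_eq_add_neg] using norm_add_le z.2 (-z.1)
        have h1' := hz.1
        have h2' := hz.2
        have : ‖(2 : ℂ)‖ = 2 := by norm_num
        rw [this]
        nlinarith [norm_nonneg (z.2 - z.1)]
  · -- N ≥ 3
    have spec := Classical.choose_spec (exists_max kEnum (lejaTup kEnum N))
    rw [lejaSeq_big kEnum hN3]
    constructor
    · exact ⟨_, spec.1, rfl⟩
    · rintro y ⟨z, hz, rfl⟩
      exact spec.2 z hz

/-- there is a Leja sequence for the closed unit bidisc that is not the
intertwining sequence of any two complex sequences, and neither of whose coordinate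
sequences is a Leja sequence for the closed unit disk; in fact, any Leja sequence for
`D̄²` beginning with `(1,1), (−1,−1), (e^{iπ/4}, −e^{iπ/4})` has these properties. -/
theorem statement7
    (kEnum : ℕ → ℕ × ℕ) (hbij : Function.Bijective kEnum)
    (hmono : ∀ a b : ℕ, a < b → GradedLexLt2 (kEnum a) (kEnum b)) :
    (∃ G : ℕ → ℂ × ℂ, IsLejaSeq2 kEnum Bidisc G ∧
      (¬ ∃ η θ : ℕ → ℂ, ∀ n, G n = (η (kEnum n).1, θ (kEnum n).2)) ∧
      ¬ IsLejaDisk (fun n => (G n).1) ∧ ¬ IsLejaDisk (fun n => (G n).2)) ∧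
    (∀ G : ℕ → ℂ × ℂ, IsLejaSeq2 kEnum Bidisc G →
      G 0 = (1, 1) → G 1 = (-1, -1) →
      G 2 = (Complex.exp ((Real.pi : ℂ) * Complex.I / 4),
             -Complex.exp ((Real.pi : ℂ) * Complex.I / 4)) →
      (¬ ∃ η θ : ℕ → ℂ, ∀ n, G n = (η (kEnum n).1, θ (kEnum n).2)) ∧
      ¬ IsLejaDisk (fun n => (G n).1) ∧ ¬ IsLejaDisk (fun n => (G n).2)) := by
  have h0 := kEnum0 kEnum hbij hmono
  have h1 := kEnum1 kEnum hbij hmono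
  have h2 := kEnum2 kEnum hbij hmono
  have main : ∀ G : ℕ → ℂ × ℂ, G 0 = (1, 1) → G 1 = (-1, -1) →
      G 2 = (Complex.exp ((Real.pi : ℂ) * Complex.I / 4),
             -Complex.exp ((Real.pi : ℂ) * Complex.I / 4)) →
      (¬ ∃ η θ : ℕ → ℂ, ∀ n, G n = (η (kEnum n).1, θ (kEnum n).2)) ∧
      ¬ IsLejaDisk (fun n => (G n).1) ∧ ¬ IsLejaDisk (fun n => (G n).2) := by
    intro G hG0 hG1 hG2
    refine ⟨nonInter kEnum h0 h1 G hG0 hG1, ?_, ?_⟩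
    · apply notLejaDisk
      · show (G 0).1 = 1; rw [hG0]
      · show (G 1).1 = -1; rw [hG1]
      · show (G 2).1 * (G 2).1 = Complex.I
        rw [hG2]
        exact omg_sq
    · apply notLejaDisk
      · show (G 0).2 = 1; rw [hG0]
      · show (G 1).2 = -1; rw [hG1]
      · show (G 2).2 * (G 2).2 = Complex.I
        rw [hG2]
        show (-omg) * (-omg) = Complex.I
        rw [neg_mul_neg]
        exact omg_sq
  constructor
  · refine ⟨lejaSeq kEnum, leja_isLeja kEnum h0 h1 h2,
      main (lejaSeq kEnum) (lejaSeq0 kEnum) (lejaSeq1 kEnum) (lejaSeq2 kEnum)⟩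
  · intro G _ hG0 hG1 hG2
    exact main G hG0 hG1 hG2
end

section
/- Let (η_i)_{i≥0} and (θ_j)_{j≥0} be sequences of pairwise distinct complex numbers, N ≥ 1 with associated integers d, m, and Ω_N, 𝒫_N as in the bidimensional intertwining setting. Then for every point of Ω_N the FLIP exists, i.e. there is a unique l^{(N)}_{(η_p,θ_q)} ∈ 𝒫_N equal to 1 at (η_p,θ_q) and 0 at every other point of Ω_N. Moreover, if (η_p,θ_q) ∈ Ω_N satisfies p+q = d, or p+q = d−1 and p ≥ m+1, then for all (z,w) ∈ ℂ²: l^{(N)}_{(η_p,θ_q)}(z,w) = ∏_{i=0}^{p−1} (z−η_i)/(η_p−η_i) × ∏_{j=0}^{q−1} (w−θ_j)/(θ_q−θ_j). -/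
open Finset

/-- The index set of both `Ω_N` and the monomials spanning `𝒫_N` in the bidimensional
intertwining setting with parameters `d`, `m`: pairs `(k,l)` with `k+l < d`, or
`k+l = d` and `k ≤ m`. -/
def BidIdx (d m : ℕ) (p : ℕ × ℕ) : Prop :=
  p.1 + p.2 < d ∨ (p.1 + p.2 = d ∧ p.1 ≤ m)

/-- The polynomial space `𝒫_N` (as a space of functions on `ℂ²`): the span of the
monomials `z^k w^l` with `(k,l)` in the index set. -/
noncomputable def PolySpace (d m : ℕ) : Submodule ℂ ((ℂ × ℂ) → ℂ) :=
  Submodule.span ℂ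
    {f | ∃ k l : ℕ, BidIdx d m (k, l) ∧ f = fun p : ℂ × ℂ => p.1 ^ k * p.2 ^ l}

/-- `L` is the fundamental Lagrange interpolation polynomial (FLIP) of the point
`(η_p, θ_q)` of `Ω_N`: it belongs to `𝒫_N`, equals `1` at `(η_p, θ_q)` and `0` at
every other point of `Ω_N`. -/
def IsFLIP (η θ : ℕ → ℂ) (d m : ℕ) (p q : ℕ) (L : (ℂ × ℂ) → ℂ) : Prop :=
  L ∈ PolySpace d m ∧ L (η p, θ q) = 1 ∧
    ∀ k l : ℕ, BidIdx d m (k, l) → (k, l) ≠ (p, q) → L (η k, θ l) = 0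

namespace St10

/-- Newton-type product function. -/
noncomputable def nw (η θ : ℕ → ℂ) (p q : ℕ) : (ℂ × ℂ) → ℂ :=
  fun x => (∏ i ∈ range p, (x.1 - η i)) * ∏ j ∈ range q, (x.2 - θ j)

/-- Normalized Newton function. -/
noncomputable def nwN (η θ : ℕ → ℂ) (p q : ℕ) : (ℂ × ℂ) → ℂ :=
  fun x => (nw η θ p q (η p, θ q))⁻¹ * nw η θ p q x

/-- The finite index set. -/
def Sfin (d m : ℕ) : Finset (ℕ × ℕ) :=
  (range (d + 1) ×ˢ range (d + 1)).filter
    fun s => s.1 + s.2 < d ∨ (s.1 + s.2 = d ∧ s.1 ≤ m)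

lemma mem_Sfin {d m : ℕ} {s : ℕ × ℕ} : s ∈ Sfin d m ↔ BidIdx d m s := by
  simp only [Sfin, mem_filter, mem_product, mem_range, BidIdx]
  omega

lemma bidIdx_mono {d m k l p q : ℕ} (hk : k ≤ p) (hl : l ≤ q)
    (h : BidIdx d m (p, q)) : BidIdx d m (k, l) := by
  simp only [BidIdx] at *
  omega

lemma bidIdx_le {d m p q : ℕ} (h : BidIdx d m (p, q)) : p + q ≤ d := by
  simp only [BidIdx] at h; omega

variable {η θ : ℕ → ℂ}

lemma nw_node_ne_zero (hη : Function.Injective η) (hθ : Function.Injective θ)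
    (p q : ℕ) : nw η θ p q (η p, θ q) ≠ 0 := by
  simp only [nw]
  apply mul_ne_zero <;>
  · refine Finset.prod_ne_zero_iff.2 fun i hi => sub_ne_zero.2 fun hc => ?_
    first
      | exact absurd (hη hc) (by simp only [mem_range] at hi; omega)
      | exact absurd (hθ hc) (by simp only [mem_range] at hi; omega)

lemma nw_eval_zero {p q k l : ℕ} (h : k < p ∨ l < q) :
    nw η θ p q (η k, θ l) = 0 := by
  simp only [nw]
  rcases h with h | h
  · have : ∏ i ∈ range p, (η k - η i) = 0 :=
      Finset.prod_eq_zero (mem_range.2 h) (sub_self _)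
    simp [this]
  · have : ∏ j ∈ range q, (θ l - θ j) = 0 :=
      Finset.prod_eq_zero (mem_range.2 h) (sub_self _)
    simp [this]

lemma nwN_self (hη : Function.Injective η) (hθ : Function.Injective θ)
    (p q : ℕ) : nwN η θ p q (η p, θ q) = 1 := by
  simp only [nwN]
  exact inv_mul_cancel₀ (nw_node_ne_zero hη hθ p q)

lemma nwN_eval_zero {p q k l : ℕ} (h : k < p ∨ l < q) :
    nwN η θ p q (η k, θ l) = 0 := by
  simp only [nwN, nw_eval_zero h, mul_zero]

lemma nw_mem {d m : ℕ} {p q : ℕ} (h : BidIdx d m (p, q)) :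
    nw η θ p q ∈ PolySpace d m := by
  classical
  set P : Polynomial ℂ := ∏ i ∈ range p, (Polynomial.X - Polynomial.C (η i)) with hP
  set Q : Polynomial ℂ := ∏ j ∈ range q, (Polynomial.X - Polynomial.C (θ j)) with hQ
  have hPdeg : P.natDegree < p + 1 := by
    have := Polynomial.natDegree_prod_le (range p)
      (fun i => Polynomial.X - Polynomial.C (η i))
    simp only [Polynomial.natDegree_X_sub_C, Finset.sum_const, card_range,
      smul_eq_mul, mul_one] at this
    rw [← hP] at this
    omega
  have hQdeg : Q.natDegree < q + 1 := by
    have := Polynomial.natDegree_prod_le (range q)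
      (fun j => Polynomial.X - Polynomial.C (θ j))
    simp only [Polynomial.natDegree_X_sub_C, Finset.sum_const, card_range,
      smul_eq_mul, mul_one] at this
    rw [← hQ] at this
    omega
  have key : nw η θ p q = ∑ k ∈ range (p + 1), ∑ l ∈ range (q + 1),
      (P.coeff k * Q.coeff l) • (fun x : ℂ × ℂ => x.1 ^ k * x.2 ^ l) := by
    funext x
    have h1 : ∏ i ∈ range p, (x.1 - η i) = ∑ k ∈ range (p + 1), P.coeff k * x.1 ^ k := by
      rw [← Polynomial.eval_eq_sum_range' hPdeg, hP, Polynomial.eval_prod]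
      simp
    have h2 : ∏ j ∈ range q, (x.2 - θ j) = ∑ l ∈ range (q + 1), Q.coeff l * x.2 ^ l := by
      rw [← Polynomial.eval_eq_sum_range' hQdeg, hQ, Polynomial.eval_prod]
      simp
    simp only [nw, h1, h2, Finset.sum_apply, Pi.smul_apply, smul_eq_mul]
    rw [Finset.sum_mul_sum]
    refine Finset.sum_congr rfl fun k _ => Finset.sum_congr rfl fun l _ => by ring
  rw [key]
  refine Submodule.sum_mem _ fun k hk => Submodule.sum_mem _ fun l hl =>
    Submodule.smul_mem _ _ (Submodule.subset_span ?_)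
  exact ⟨k, l, bidIdx_mono (by simp only [mem_range] at hk; omega)
    (by simp only [mem_range] at hl; omega) h, rfl⟩

lemma nwN_mem {d m : ℕ} {p q : ℕ} (h : BidIdx d m (p, q)) :
    nwN η θ p q ∈ PolySpace d m := by
  have : nwN η θ p q = (nw η θ p q (η p, θ q))⁻¹ • nw η θ p q := by
    funext x; simp [nwN, smul_eq_mul]
  rw [this]
  exact Submodule.smul_mem _ _ (nw_mem h)

/-- The FLIP, built by downward recursion on the level `p+q`. -/
noncomputable def flipP (η θ : ℕ → ℂ) (d m : ℕ) (pq : ℕ × ℕ) : (ℂ × ℂ) → ℂ :=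
  nwN η θ pq.1 pq.2 -
    ∑ s ∈ ((Sfin d m).filter fun s => pq.1 + pq.2 < s.1 + s.2).attach,
      nwN η θ pq.1 pq.2 (η s.1.1, θ s.1.2) • flipP η θ d m s.1
termination_by d + 1 - (pq.1 + pq.2)
decreasing_by
  have hs := s.2
  simp only [mem_filter] at hs
  have h2 : s.1.1 + s.1.2 ≤ d := bidIdx_le (mem_Sfin.1 hs.1)
  omega

lemma flipP_isFLIP (hη : Function.Injective η) (hθ : Function.Injective θ)
    (d m : ℕ) :
    ∀ n p q, d + 1 - (p + q) ≤ n → BidIdx d m (p, q) →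
      IsFLIP η θ d m p q (flipP η θ d m (p, q)) := by
  intro n
  induction n with
  | zero =>
    intro p q hn h
    have := bidIdx_le h
    omega
  | succ n ih =>
    intro p q hn h
    have hpq : p + q ≤ d := bidIdx_le h
    set T := (Sfin d m).filter fun s => p + q < s.1 + s.2 with hT
    have hTfacts : ∀ s ∈ T, BidIdx d m s ∧ p + q < s.1 + s.2 := by
      intro s hs
      simp only [hT, mem_filter] at hs
      exact ⟨mem_Sfin.1 hs.1, hs.2⟩
    have hIH : ∀ s ∈ T, IsFLIP η θ d m s.1 s.2 (flipP η θ d m s) := by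
      intro s hs
      obtain ⟨hB, hlt⟩ := hTfacts s hs
      have hsd : s.1 + s.2 ≤ d := by
        obtain ⟨a, b⟩ := s; exact bidIdx_le hB
      have := ih s.1 s.2 (by omega) (by obtain ⟨a, b⟩ := s; exact hB)
      obtain ⟨a, b⟩ := s
      exact this
    have hflip_eq : flipP η θ d m (p, q) = nwN η θ p q -
        ∑ s ∈ T.attach, nwN η θ p q (η s.1.1, θ s.1.2) • flipP η θ d m s.1 := by
      rw [flipP]
    refine ⟨?_, ?_, ?_⟩
    · rw [hflip_eq]
      refine Submodule.sub_mem _ (nwN_mem h) (Submodule.sum_mem _ fun s hs =>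
        Submodule.smul_mem _ _ ?_)
      exact (hIH s.1 s.2).1
    · rw [hflip_eq]
      simp only [Pi.sub_apply, Finset.sum_apply, Pi.smul_apply, smul_eq_mul]
      rw [nwN_self hη hθ]
      have hz : ∀ s ∈ T.attach,
          nwN η θ p q (η s.1.1, θ s.1.2) * flipP η θ d m s.1 (η p, θ q) = 0 := by
        intro s _
        have hfl := hIH s.1 s.2
        have hlt := (hTfacts s.1 s.2).2
        have : flipP η θ d m s.1 (η p, θ q) = 0 := by
          refine hfl.2.2 p q h fun hc => ?_
          rw [Prod.mk.injEq] at hc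
          omega
        rw [this, mul_zero]
      rw [Finset.sum_eq_zero hz, sub_zero]
    · intro a b hab hne
      rw [hflip_eq]
      simp only [Pi.sub_apply, Finset.sum_apply, Pi.smul_apply, smul_eq_mul]
      have hsum : ∑ s ∈ T.attach,
          nwN η θ p q (η s.1.1, θ s.1.2) * flipP η θ d m s.1 (η a, θ b)
          = if (a, b) ∈ T then nwN η θ p q (η a, θ b) else 0 := by
        rw [Finset.sum_attach T
          (fun s => nwN η θ p q (η s.1, θ s.2) * flipP η θ d m s (η a, θ b))]
        rw [← Finset.sum_ite_eq' T ((a, b) : ℕ × ℕ)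
          (fun s => nwN η θ p q (η s.1, θ s.2))]
        refine Finset.sum_congr rfl fun s hs => ?_
        have hfl := hIH s hs
        by_cases hsab : s = (a, b)
        · subst hsab
          simp [hfl.2.1]
        · rw [if_neg hsab]
          have : flipP η θ d m s (η a, θ b) = 0 := by
            obtain ⟨s1, s2⟩ := s
            refine hfl.2.2 a b hab fun hc => hsab ?_
            rw [Prod.mk.injEq] at hc ⊢
            exact ⟨hc.1.symm, hc.2.symm⟩
          rw [this, mul_zero]
      rw [hsum]
      by_cases hmem : (a, b) ∈ T
      · rw [if_pos hmem, sub_self]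
      · rw [if_neg hmem, sub_zero]
        have hnlt : ¬ p + q < a + b := fun hlt =>
          hmem (mem_filter.2 ⟨mem_Sfin.2 hab, hlt⟩)
      -- then a < p or b < q
        have hor : a < p ∨ b < q := by
          by_contra hc
          push_neg at hc
          have : a = p ∧ b = q := by omega
          exact hne (by rw [this.1, this.2])
        exact nwN_eval_zero hor

/-- Evaluation linear map at the nodes. -/
noncomputable def evalMap (η θ : ℕ → ℂ) (d m : ℕ) :
    ((ℂ × ℂ) → ℂ) →ₗ[ℂ] ({s // s ∈ Sfin d m} → ℂ) where
  toFun f := fun s => f (η s.1.1, θ s.1.2)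
  map_add' f g := rfl
  map_smul' c f := rfl

lemma polySpace_eq (η θ : ℕ → ℂ) (d m : ℕ) :
    PolySpace d m = Submodule.span ℂ
      ((fun s : ℕ × ℕ => (fun x : ℂ × ℂ => x.1 ^ s.1 * x.2 ^ s.2)) ''
        ↑(Sfin d m)) := by
  unfold PolySpace
  congr 1
  ext f
  simp only [Set.mem_image, mem_coe, Set.mem_setOf_eq]
  constructor
  · rintro ⟨k, l, hkl, rfl⟩
    exact ⟨(k, l), mem_Sfin.2 hkl, rfl⟩
  · rintro ⟨s, hs, rfl⟩
    exact ⟨s.1, s.2, by obtain ⟨a, b⟩ := s; exact mem_Sfin.1 hs, rfl⟩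

lemma vanish_eq_zero (hη : Function.Injective η) (hθ : Function.Injective θ)
    (d m : ℕ) (f : (ℂ × ℂ) → ℂ) (hf : f ∈ PolySpace d m)
    (hv : ∀ k l : ℕ, BidIdx d m (k, l) → f (η k, θ l) = 0) : f = 0 := by
  classical
  have hfin : FiniteDimensional ℂ (PolySpace d m) := by
    rw [polySpace_eq η θ d m]
    exact FiniteDimensional.span_of_finite ℂ ((Finset.finite_toSet _).image _)
  set e := (evalMap η θ d m).comp (PolySpace d m).subtype with he
  have hsurj : Function.Surjective e := by
    intro g
    have hmem : (∑ s ∈ (Sfin d m).attach, g s • flipP η θ d m s.1) ∈ PolySpace d m := by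
      refine Submodule.sum_mem _ fun s _ => Submodule.smul_mem _ _ ?_
      have hB : BidIdx d m s.1 := mem_Sfin.1 s.2
      have : IsFLIP η θ d m s.1.1 s.1.2 (flipP η θ d m (s.1.1, s.1.2)) :=
        flipP_isFLIP hη hθ d m (d + 1) s.1.1 s.1.2 (by omega)
          (by obtain ⟨⟨a, b⟩, hs⟩ := s; exact hB)
      obtain ⟨⟨a, b⟩, hs⟩ := s
      exact this.1
    refine ⟨⟨_, hmem⟩, ?_⟩
    funext t
    simp only [he, evalMap, LinearMap.coe_comp, Function.comp_apply,
      Submodule.coe_subtype, LinearMap.coe_mk, AddHom.coe_mk,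
      Finset.sum_apply, Pi.smul_apply, smul_eq_mul]
    rw [Finset.sum_eq_single t]
    · have hB : BidIdx d m t.1 := mem_Sfin.1 t.2
      have hfl : IsFLIP η θ d m t.1.1 t.1.2 (flipP η θ d m (t.1.1, t.1.2)) :=
        flipP_isFLIP hη hθ d m (d + 1) t.1.1 t.1.2 (by omega)
          (by obtain ⟨⟨a, b⟩, hs⟩ := t; exact hB)
      have : flipP η θ d m t.1 (η t.1.1, θ t.1.2) = 1 := by
        obtain ⟨⟨a, b⟩, hs⟩ := t
        exact hfl.2.1
      rw [this, mul_one]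
    · intro s _ hst
      have hB : BidIdx d m s.1 := mem_Sfin.1 s.2
      have hBt : BidIdx d m t.1 := mem_Sfin.1 t.2
      have hfl : IsFLIP η θ d m s.1.1 s.1.2 (flipP η θ d m (s.1.1, s.1.2)) :=
        flipP_isFLIP hη hθ d m (d + 1) s.1.1 s.1.2 (by omega)
          (by obtain ⟨⟨a, b⟩, hs⟩ := s; exact hB)
      have hzero : flipP η θ d m s.1 (η t.1.1, θ t.1.2) = 0 := by
        have hne : (t.1.1, t.1.2) ≠ (s.1.1, s.1.2) := by
          intro hc
          apply hst
          apply Subtype.ext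
          obtain ⟨⟨a, b⟩, _⟩ := s
          obtain ⟨⟨a', b'⟩, _⟩ := t
          simpa using hc.symm
        have := hfl.2.2 t.1.1 t.1.2 (by obtain ⟨⟨a, b⟩, _⟩ := t; exact hBt) hne
        obtain ⟨⟨a, b⟩, _⟩ := s
        exact this
      rw [hzero, mul_zero]
    · intro htt
      exact absurd (Finset.mem_attach _ t) htt
  have hrankpi : Module.finrank ℂ ({s // s ∈ Sfin d m} → ℂ) = (Sfin d m).card := by
    rw [Module.finrank_pi, Fintype.card_coe]
  have hle : Module.finrank ℂ (PolySpace d m) ≤ (Sfin d m).card := by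
    have h1 : Module.finrank ℂ (PolySpace d m) ≤
        ((Sfin d m).image fun s : ℕ × ℕ =>
          (fun x : ℂ × ℂ => x.1 ^ s.1 * x.2 ^ s.2)).card := by
      rw [polySpace_eq η θ d m, ← Finset.coe_image]
      exact finrank_span_finset_le_card _
    exact h1.trans (Finset.card_image_le)
  have hge : (Sfin d m).card ≤ Module.finrank ℂ (PolySpace d m) := by
    have hr : LinearMap.range e = ⊤ := LinearMap.range_eq_top.2 hsurj
    have := LinearMap.finrank_range_add_finrank_ker e
    rw [hr] at this
    rw [finrank_top] at this
    omega
  have hinj : Function.Injective e :=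
    (LinearMap.injective_iff_surjective_of_finrank_eq_finrank
      (by omega)).2 hsurj
  have h0 : e ⟨f, hf⟩ = 0 := by
    funext s
    simp only [he, evalMap, LinearMap.coe_comp, Function.comp_apply,
      Submodule.coe_subtype, LinearMap.coe_mk, AddHom.coe_mk, Pi.zero_apply]
    exact hv s.1.1 s.1.2 (by have := mem_Sfin.1 s.2; obtain ⟨⟨a, b⟩, _⟩ := s; exact this)
  have : (⟨f, hf⟩ : PolySpace d m) = 0 := hinj (by rw [h0, map_zero])
  exact congrArg Subtype.val this

lemma isFLIP_unique (hη : Function.Injective η) (hθ : Function.Injective θ)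
    {d m p q : ℕ} (h : BidIdx d m (p, q)) {L L' : (ℂ × ℂ) → ℂ}
    (h1 : IsFLIP η θ d m p q L) (h2 : IsFLIP η θ d m p q L') : L = L' := by
  have hz : L - L' = 0 := by
    refine vanish_eq_zero hη hθ d m _ (Submodule.sub_mem _ h1.1 h2.1) ?_
    intro k l hkl
    by_cases hk : (k, l) = (p, q)
    · rw [Prod.mk.injEq] at hk
      obtain ⟨rfl, rfl⟩ := hk
      simp only [Pi.sub_apply, h1.2.1, h2.2.1, sub_self]
    · simp only [Pi.sub_apply, h1.2.2 k l hkl hk, h2.2.2 k l hkl hk, sub_self]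
  exact sub_eq_zero.1 hz

lemma nwN_isFLIP (hη : Function.Injective η) (hθ : Function.Injective θ)
    {d m p q : ℕ} (h : BidIdx d m (p, q))
    (hmax : p + q = d ∨ (p + q + 1 = d ∧ m + 1 ≤ p)) :
    IsFLIP η θ d m p q (nwN η θ p q) := by
  refine ⟨nwN_mem h, nwN_self hη hθ p q, fun k l hkl hne => ?_⟩
  apply nwN_eval_zero
  have hne' : ¬(k = p ∧ l = q) := fun hc => hne (by rw [hc.1, hc.2])
  simp only [BidIdx] at hkl h
  omega

end St10

/-- in the bidimensional intertwining setting (`N_{d−1} < N ≤ N_d`,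
`m = N − N_{d−1} − 1`), every point of `Ω_N` has a unique FLIP, and if `p+q = d`,
or `p+q = d−1` with `p ≥ m+1`, then
`l^{(N)}_{(η_p,θ_q)}(z,w) = ∏_{i<p} (z−η_i)/(η_p−η_i) ⋅ ∏_{j<q} (w−θ_j)/(θ_q−θ_j)`. -/
theorem statement10 (η θ : ℕ → ℂ)
    (hη : Function.Injective η) (hθ : Function.Injective θ)
    (N d m : ℕ) (hN : 1 ≤ N)
    (hlow : d * (d + 1) / 2 < N) (hhigh : N ≤ (d + 1) * (d + 2) / 2)
    (hm : N = d * (d + 1) / 2 + 1 + m) :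
    (∀ p q : ℕ, BidIdx d m (p, q) → ∃! L : (ℂ × ℂ) → ℂ, IsFLIP η θ d m p q L) ∧
    ∀ p q : ℕ, BidIdx d m (p, q) →
      (p + q = d ∨ (p + q + 1 = d ∧ m + 1 ≤ p)) →
      ∀ L : (ℂ × ℂ) → ℂ, IsFLIP η θ d m p q L →
        ∀ z w : ℂ,
          L (z, w) =
            (∏ i ∈ range p, (z - η i) / (η p - η i)) *
              ∏ j ∈ range q, (w - θ j) / (θ q - θ j) := by
  constructor
  · intro p q h
    have hf := St10.flipP_isFLIP hη hθ d m (d + 1) p q (by omega) h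
    exact ⟨St10.flipP η θ d m (p, q), hf,
      fun L hL => St10.isFLIP_unique hη hθ h hL hf⟩
  · intro p q h hmax L hL z w
    have hEq := St10.isFLIP_unique hη hθ h hL (St10.nwN_isFLIP hη hθ h hmax)
    rw [hEq]
    show (St10.nw η θ p q (η p, θ q))⁻¹ * St10.nw η θ p q (z, w) = _
    rw [Finset.prod_div_distrib, Finset.prod_div_distrib]
    simp only [St10.nw]
    rw [div_mul_div_comm, ← inv_mul_eq_div]
end

section
/- Let (η_i)_{i≥0} and (θ_j)_{j≥0} be sequences of pairwise distinct complex numbers, N ≥ 1 with associated integers d, m, and Ω_N, 𝒫_N as in the bidimensional intertwining setting. If the point (η_m, θ_{d−m−1}) belongs to Ω_N (case p = m, q = d−m−1, p+q = d−1), then for all (z,w) ∈ ℂ²: l^{(N)}_{(η_m,θ_{d−m−1})}(z,w) = ∏_{i=0}^{m−1} (z−η_i)/(η_m−η_i) × ∏_{j=0, j≠d−m−1}^{d−m} (w−θ_j)/(θ_{d−m−1}−θ_j). -/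
open Finset

/-! ### Auxiliary machinery -/

/-- Monomial as a function on `ℂ²`. -/
def monoF (k l : ℕ) : (ℂ × ℂ) → ℂ := fun p => p.1 ^ k * p.2 ^ l

/-- Newton basis function. -/
def nmF (η θ : ℕ → ℂ) (k l : ℕ) : (ℂ × ℂ) → ℂ :=
  fun p => (∏ i ∈ range k, (p.1 - η i)) * ∏ j ∈ range l, (p.2 - θ j)

def NewtSet (η θ : ℕ → ℂ) (d m : ℕ) : Set ((ℂ × ℂ) → ℂ) :=
  {f | ∃ k l : ℕ, BidIdx d m (k, l) ∧ f = nmF η θ k l}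

lemma expand1 (ξ : ℕ → ℂ) (s : Finset ℕ) (z : ℂ) :
    ∏ i ∈ s, (z - ξ i) = ∑ t ∈ s.powerset, z ^ t.card * ∏ i ∈ s \ t, (-ξ i) := by
  have h : ∀ i ∈ s, z - ξ i = (fun _ : ℕ => z) i + (fun i => -ξ i) i :=
    fun i _ => sub_eq_add_neg _ _
  rw [Finset.prod_congr rfl h, Finset.prod_add]
  exact Finset.sum_congr rfl fun t _ => by rw [Finset.prod_const]

lemma expand2 (ξ ζ : ℕ → ℂ) (s u : Finset ℕ) :
    (fun p : ℂ × ℂ => (∏ i ∈ s, (p.1 - ξ i)) * ∏ j ∈ u, (p.2 - ζ j)) =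
      ∑ q ∈ s.powerset ×ˢ u.powerset,
        ((∏ i ∈ s \ q.1, (-ξ i)) * ∏ j ∈ u \ q.2, (-ζ j)) • monoF q.1.card q.2.card := by
  funext p
  rw [Finset.sum_apply, expand1, expand1, Finset.sum_mul_sum, Finset.sum_product]
  refine Finset.sum_congr rfl fun t _ => Finset.sum_congr rfl fun v _ => ?_
  simp only [Pi.smul_apply, smul_eq_mul, monoF]
  ring

lemma mono_mem (η θ : ℕ → ℂ) (d m : ℕ) :
    ∀ n k l : ℕ, k + l = n → BidIdx d m (k, l) →
      monoF k l ∈ Submodule.span ℂ (NewtSet η θ d m) := by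
  intro n
  induction n using Nat.strong_induction_on with
  | _ n ih =>
    intro k l hn hb
    have hkl : k + l ≤ d := by rcases hb with h | h <;> omega
    have htop : ((range k, range l) : Finset ℕ × Finset ℕ) ∈
        (range k).powerset ×ˢ (range l).powerset := by
      simp [Finset.mem_product]
    have hsum : nmF η θ k l =
        ∑ q ∈ (range k).powerset ×ˢ (range l).powerset,
          ((∏ i ∈ range k \ q.1, (-η i)) * ∏ j ∈ range l \ q.2, (-θ j)) •
            monoF q.1.card q.2.card := expand2 η θ (range k) (range l)
    rw [← Finset.add_sum_erase _ _ htop] at hsum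
    simp only [Finset.sdiff_self, Finset.prod_empty, one_mul, Finset.card_range,
      one_smul] at hsum
    have hmono : monoF k l = nmF η θ k l -
        ∑ q ∈ (((range k).powerset ×ˢ (range l).powerset).erase (range k, range l)),
          ((∏ i ∈ range k \ q.1, (-η i)) * ∏ j ∈ range l \ q.2, (-θ j)) •
            monoF q.1.card q.2.card := eq_sub_of_add_eq hsum.symm
    rw [hmono]
    refine Submodule.sub_mem _ (Submodule.subset_span ⟨k, l, hb, rfl⟩)
      (Submodule.sum_mem _ fun q hq => ?_)
    obtain ⟨hqne, hqmem⟩ := Finset.mem_erase.1 hq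
    obtain ⟨h1, h2⟩ := Finset.mem_product.1 hqmem
    have hs1 : q.1 ⊆ range k := Finset.mem_powerset.1 h1
    have hs2 : q.2 ⊆ range l := Finset.mem_powerset.1 h2
    have hc1 : q.1.card ≤ k := by
      simpa using Finset.card_le_card hs1
    have hc2 : q.2.card ≤ l := by
      simpa using Finset.card_le_card hs2
    have hlt : q.1.card + q.2.card < k + l := by
      by_contra h
      have e1 : q.1 = range k :=
        Finset.eq_of_subset_of_card_le hs1 (by simp; omega)
      have e2 : q.2 = range l :=
        Finset.eq_of_subset_of_card_le hs2 (by simp; omega)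
      exact hqne (Prod.ext e1 e2)
    exact Submodule.smul_mem _ _
      (ih _ (by omega) _ _ rfl (Or.inl (by omega)))

lemma polyspace_le (η θ : ℕ → ℂ) (d m : ℕ) :
    PolySpace d m ≤ Submodule.span ℂ (NewtSet η θ d m) := by
  rw [PolySpace, Submodule.span_le]
  rintro f ⟨k, l, hb, rfl⟩
  exact mono_mem η θ d m (k + l) k l rfl hb

def Tfin (d m : ℕ) : Finset (ℕ × ℕ) :=
  (range (d + 1) ×ˢ range (d + 1)).filter fun q => q.1 + q.2 < d ∨ (q.1 + q.2 = d ∧ q.1 ≤ m)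

lemma mem_Tfin {d m : ℕ} {q : ℕ × ℕ} : q ∈ Tfin d m ↔ BidIdx d m q := by
  simp only [Tfin, Finset.mem_filter, Finset.mem_product, Finset.mem_range, BidIdx]
  omega

lemma newt_range (η θ : ℕ → ℂ) (d m : ℕ) :
    NewtSet η θ d m = Set.range fun q : {x // x ∈ Tfin d m} => nmF η θ q.1.1 q.1.2 := by
  ext f
  constructor
  · rintro ⟨k, l, hb, rfl⟩
    exact ⟨⟨(k, l), mem_Tfin.2 hb⟩, rfl⟩
  · rintro ⟨⟨⟨k, l⟩, hq⟩, rfl⟩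
    exact ⟨k, l, mem_Tfin.1 hq, rfl⟩

lemma vanish (η θ : ℕ → ℂ) (hη : Function.Injective η) (hθ : Function.Injective θ)
    (d m : ℕ) (g : (ℂ × ℂ) → ℂ)
    (hg : g ∈ Submodule.span ℂ (NewtSet η θ d m))
    (h0 : ∀ k l : ℕ, BidIdx d m (k, l) → g (η k, θ l) = 0) : g = 0 := by
  rw [newt_range] at hg
  obtain ⟨c, hc⟩ := (Submodule.mem_span_range_iff_exists_fun ℂ).1 hg
  have hz : ∀ n (q : {x // x ∈ Tfin d m}), q.1.1 + q.1.2 = n → c q = 0 := by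
    intro n
    induction n using Nat.strong_induction_on with
    | _ n ih =>
      intro q hqn
      have hb : BidIdx d m (q.1.1, q.1.2) := mem_Tfin.1 q.2
      have hev := h0 q.1.1 q.1.2 hb
      rw [← hc, Finset.sum_apply] at hev
      have hone : ∀ r : {x // x ∈ Tfin d m}, r ∈ Finset.univ → r ≠ q →
          (c r • nmF η θ r.1.1 r.1.2) (η q.1.1, θ q.1.2) = 0 := by
        intro r _ hne
        simp only [Pi.smul_apply, smul_eq_mul]
        by_cases hle : r.1.1 ≤ q.1.1 ∧ r.1.2 ≤ q.1.2
        · have hsub : r.1.1 + r.1.2 < n := by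
            rcases Nat.lt_or_ge (r.1.1 + r.1.2) n with h | h
            · exact h
            · exfalso
              exact hne (Subtype.ext (Prod.ext (by omega) (by omega)))
          rw [ih _ hsub r rfl, zero_mul]
        · have hzero : nmF η θ r.1.1 r.1.2 (η q.1.1, θ q.1.2) = 0 := by
            rcases Nat.lt_or_ge q.1.1 r.1.1 with h | h
            · exact mul_eq_zero_of_left
                (Finset.prod_eq_zero (Finset.mem_range.2 h) (by simp)) _
            · have h2 : q.1.2 < r.1.2 := by omega
              exact mul_eq_zero_of_right _
                (Finset.prod_eq_zero (Finset.mem_range.2 h2) (by simp))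
          rw [hzero, mul_zero]
      rw [Finset.sum_eq_single_of_mem q (Finset.mem_univ q) hone] at hev
      simp only [Pi.smul_apply, smul_eq_mul] at hev
      have hnz : nmF η θ q.1.1 q.1.2 (η q.1.1, θ q.1.2) ≠ 0 := by
        refine mul_ne_zero (Finset.prod_ne_zero_iff.2 fun i hi => ?_)
          (Finset.prod_ne_zero_iff.2 fun j hj => ?_)
        · exact sub_ne_zero_of_ne (hη.ne (by simp at hi; omega))
        · exact sub_ne_zero_of_ne (hθ.ne (by simp at hj; omega))
      exact (mul_eq_zero.1 hev).resolve_right hnz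
  rw [← hc]
  have : ∀ q, c q = 0 := fun q => hz _ q rfl
  simp [this]

noncomputable def RF (η θ : ℕ → ℂ) (d m : ℕ) : (ℂ × ℂ) → ℂ :=
  fun p => (∏ i ∈ range m, (p.1 - η i) / (η m - η i)) *
    ∏ j ∈ (range (d - m + 1)).erase (d - m - 1), (p.2 - θ j) / (θ (d - m - 1) - θ j)

lemma RF_mem (η θ : ℕ → ℂ) (d m : ℕ) (hmd : m + 1 ≤ d) :
    RF η θ d m ∈ PolySpace d m := by
  set E := (range (d - m + 1)).erase (d - m - 1) with hEdef
  have hE : E.card = d - m := by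
    rw [hEdef, Finset.card_erase_of_mem (Finset.mem_range.2 (by omega)), Finset.card_range]
    omega
  have key : RF η θ d m =
      ((∏ i ∈ range m, (η m - η i))⁻¹ *
        (∏ j ∈ E, (θ (d - m - 1) - θ j))⁻¹) •
        fun p : ℂ × ℂ => (∏ i ∈ range m, (p.1 - η i)) * ∏ j ∈ E, (p.2 - θ j) := by
    funext p
    simp only [RF, Pi.smul_apply, smul_eq_mul, ← hEdef]
    rw [Finset.prod_div_distrib, Finset.prod_div_distrib]
    ring
  rw [key, expand2]
  refine Submodule.smul_mem _ _ (Submodule.sum_mem _ fun q hq => Submodule.smul_mem _ _ ?_)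
  obtain ⟨h1, h2⟩ := Finset.mem_product.1 hq
  have hc1 : q.1.card ≤ m := by
    simpa using Finset.card_le_card (Finset.mem_powerset.1 h1)
  have hc2 : q.2.card ≤ d - m := by
    have := Finset.card_le_card (Finset.mem_powerset.1 h2)
    omega
  refine Submodule.subset_span ⟨q.1.card, q.2.card, ?_, rfl⟩
  simp only [BidIdx]
  omega

lemma RF_one (η θ : ℕ → ℂ) (hη : Function.Injective η) (hθ : Function.Injective θ)
    (d m : ℕ) : RF η θ d m (η m, θ (d - m - 1)) = 1 := by
  rw [RF]
  rw [Finset.prod_eq_one fun i hi => div_self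
      (sub_ne_zero_of_ne (hη.ne (by simp at hi; omega))),
    Finset.prod_eq_one fun j hj => div_self
      (sub_ne_zero_of_ne (hθ.ne (Finset.ne_of_mem_erase hj).symm)),
    one_mul]

lemma RF_zero (η θ : ℕ → ℂ) (d m : ℕ) (hmd : m + 1 ≤ d) :
    ∀ k l : ℕ, BidIdx d m (k, l) → (k, l) ≠ (m, d - m - 1) →
      RF η θ d m (η k, θ l) = 0 := by
  intro k l hb hne
  rw [RF]
  by_cases hk : k < m
  · exact mul_eq_zero_of_left
      (Finset.prod_eq_zero (Finset.mem_range.2 hk) (by simp)) _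
  · have hl1 : l ≠ d - m - 1 := by
      intro hl
      rcases hb with h | h
      · rcases Nat.lt_or_ge m k with h' | h'
        · omega
        · have hkm : k = m := by omega
          exact hne (by rw [hkm, hl])
      · have hkm : k = m := by omega
        omega
    have hl2 : l < d - m + 1 := by rcases hb with h | h <;> omega
    exact mul_eq_zero_of_right _
      (Finset.prod_eq_zero (i := l)
        (Finset.mem_erase.2 ⟨hl1, Finset.mem_range.2 hl2⟩) (by simp))

/-- in the bidimensional intertwining setting, for the point
`(η_m, θ_{d−m−1})` of `Ω_N` (case `p = m`, `q = d−m−1`, `p+q = d−1`),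
`l^{(N)}_{(η_m,θ_{d−m−1})}(z,w) = ∏_{i<m} (z−η_i)/(η_m−η_i) ⋅
  ∏_{j≤d−m, j≠d−m−1} (w−θ_j)/(θ_{d−m−1}−θ_j)`. -/
theorem statement11 (η θ : ℕ → ℂ)
    (hη : Function.Injective η) (hθ : Function.Injective θ)
    (N d m : ℕ) (hN : 1 ≤ N)
    (hlow : d * (d + 1) / 2 < N) (hhigh : N ≤ (d + 1) * (d + 2) / 2)
    (hm : N = d * (d + 1) / 2 + 1 + m)
    (hmd : m + 1 ≤ d) :
    ∀ L : (ℂ × ℂ) → ℂ, IsFLIP η θ d m m (d - m - 1) L →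
      ∀ z w : ℂ,
        L (z, w) =
          (∏ i ∈ range m, (z - η i) / (η m - η i)) *
            ∏ j ∈ (range (d - m + 1)).erase (d - m - 1),
              (w - θ j) / (θ (d - m - 1) - θ j) := by
  intro L hL z w
  have hD : L - RF η θ d m ∈ Submodule.span ℂ (NewtSet η θ d m) :=
    Submodule.sub_mem _ (polyspace_le η θ d m hL.1)
      (polyspace_le η θ d m (RF_mem η θ d m hmd))
  have hvan : ∀ k l : ℕ, BidIdx d m (k, l) → (L - RF η θ d m) (η k, θ l) = 0 := by
    intro k l hb
    by_cases h : (k, l) = (m, d - m - 1)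
    · rw [Prod.mk.injEq] at h
      obtain ⟨h1, h2⟩ := h
      rw [Pi.sub_apply, h1, h2, hL.2.1, RF_one η θ hη hθ d m, sub_self]
    · simp [Pi.sub_apply, hL.2.2 k l hb h, RF_zero η θ d m hmd k l hb h]
  have hzero := vanish η θ hη hθ d m _ hD hvan
  have hLR := congrFun hzero (z, w)
  simp only [Pi.sub_apply, Pi.zero_apply, sub_eq_zero] at hLR
  exact hLR
end

section
/- Let (η_i)_{i≥0} and (θ_j)_{j≥0} be sequences of pairwise distinct complex numbers, N ≥ 1 with associated integers d, m, and Ω_N, 𝒫_N as in the bidimensional intertwining setting. If (η_p,θ_q) ∈ Ω_N with p+q = d−1 and 0 ≤ p ≤ m−1, then for all (z,w) ∈ ℂ²: l^{(N)}_{(η_p,θ_q)}(z,w) = ∏_{i=0, i≠p}^{p+1} (z−η_i)/(η_p−η_i) · ∏_{j=0}^{q−1} (w−θ_j)/(θ_q−θ_j) − ∏_{i=0}^{p−1} (z−η_i)/(η_p−η_i) · ∏_{j=0}^{q−1} (w−θ_j)/(θ_q−θ_j) + ∏_{i=0}^{p−1} (z−η_i)/(η_p−η_i) · ∏_{j=0,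 j≠q}^{q+1} (w−θ_j)/(θ_q−θ_j). -/
open Finset

lemma bidIdx_iff (d m k l : ℕ) : BidIdx d m (k, l) ↔ (k + l < d ∨ (k + l = d ∧ k ≤ m)) :=
  Iff.rfl

open Polynomial in
lemma vanish_zero : ∀ d m : ℕ, m ≤ d → ∀ η θ : ℕ → ℂ, Function.Injective η → Function.Injective θ →
    ∀ F : Polynomial (Polynomial ℂ),
    (∀ k l : ℕ, ¬ BidIdx d m (k, l) → (F.coeff k).coeff l = 0) →
    (∀ k l : ℕ, BidIdx d m (k, l) → (F.eval (C (η k))).eval (θ l) = 0) →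
    F = 0 := by
  intro d
  induction d using Nat.strong_induction_on with
  | _ d IH =>
    intro m hmd η θ hη hθ F hsupp hvan
    have hcol : ∀ k, (F.coeff k).natDegree ≤ d := by
      intro k
      refine natDegree_le_iff_coeff_eq_zero.2 fun N hN => hsupp k N ?_
      simp only [bidIdx_iff]; omega
    have hF0deg : (F.eval (C (η 0))).natDegree ≤ d := by
      rw [eval_eq_sum_range]
      refine natDegree_sum_le_of_forall_le _ _ fun i _ => ?_
      refine (natDegree_mul_le).trans ?_
      rw [← C_pow, natDegree_C]
      simpa using hcol i
    have hF0 : F.eval (C (η 0)) = 0 := by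
      refine eq_zero_of_natDegree_lt_card_of_eval_eq_zero' _ ((range (d+1)).image θ)
        (fun i hi => ?_) ?_
      · obtain ⟨l, hl, rfl⟩ := mem_image.1 hi
        exact hvan 0 l (by simp only [bidIdx_iff]; simp at hl; omega)
      · rw [card_image_of_injective _ hθ, card_range]; omega
    obtain ⟨G, hFG⟩ := (dvd_iff_isRoot.2 hF0 : (X - C (C (η 0))) ∣ F)
    have hrel : ∀ k, G.coeff k = F.coeff (k+1) + Polynomial.C (η 0) * G.coeff (k+1) := by
      intro k
      have h := congrArg (fun P => Polynomial.coeff P (k+1)) hFG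
      simp only [sub_mul, coeff_sub, coeff_X_mul, coeff_C_mul] at h
      linear_combination -h
    have gsupp : ∀ k l : ℕ, ¬ BidIdx d m (k+1, l) → (G.coeff k).coeff l = 0 := by
      have key : ∀ j k l : ℕ, G.natDegree < k + j → ¬ BidIdx d m (k+1, l) →
          (G.coeff k).coeff l = 0 := by
        intro j
        induction j with
        | zero => intro k l hk _; rw [show G.coeff k = 0 from coeff_eq_zero_of_natDegree_lt (by omega)]; simp
        | succ j ihj =>
          intro k l hk hS
          by_cases hdk : G.natDegree < k
          · rw [show G.coeff k = 0 from coeff_eq_zero_of_natDegree_lt (by omega)]; simp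
          · rw [hrel k, Polynomial.coeff_add, Polynomial.coeff_C_mul,
              hsupp (k+1) l hS, ihj (k+1) l (by omega) (by simp only [bidIdx_iff] at hS ⊢; omega)]
            simp
      intro k l hS
      exact key (G.natDegree + 1) k l (by omega) hS
    have gvan : ∀ k l : ℕ, BidIdx d m (k+1, l) → (G.eval (C (η (k+1)))).eval (θ l) = 0 := by
      intro k l h
      have h2 := hvan (k+1) l h
      rw [hFG] at h2
      simp only [eval_mul, eval_sub, eval_X, eval_C] at h2
      rcases mul_eq_zero.1 h2 with h3 | h3
      · exact absurd (hη (sub_eq_zero.1 h3)) (by omega)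
      · exact h3
    have hη' : Function.Injective (fun i => η (i+1)) := by
      intro a b hab
      have := hη hab; omega
    have hG : G = 0 := by
      by_cases hm1 : 1 ≤ m
      · refine IH (d-1) (by omega) (m-1) (by omega) _ θ hη' hθ G ?_ ?_
        · intro k l h; exact gsupp k l (by simp only [bidIdx_iff] at h ⊢; omega)
        · intro k l h; exact gvan k l (by simp only [bidIdx_iff] at h ⊢; omega)
      · by_cases hd2 : 2 ≤ d
        · refine IH (d-2) (by omega) (d-2) le_rfl _ θ hη' hθ G ?_ ?_
          · intro k l h; exact gsupp k l (by simp only [bidIdx_iff] at h ⊢; omega)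
          · intro k l h; exact gvan k l (by simp only [bidIdx_iff] at h ⊢; omega)
        · refine Polynomial.ext fun k => ?_
          refine Polynomial.ext fun l => ?_
          simpa using gsupp k l (by simp only [bidIdx_iff]; omega)
    rw [hFG, hG, mul_zero]

open Polynomial in
lemma exists_poly_of_mem (d m : ℕ) (f : (ℂ × ℂ) → ℂ) (hf : f ∈ PolySpace d m) :
    ∃ F : Polynomial (Polynomial ℂ),
      (∀ k l : ℕ, ¬ BidIdx d m (k, l) → (F.coeff k).coeff l = 0) ∧
      ∀ z w : ℂ, f (z, w) = (F.eval (C z)).eval w := by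
  refine Submodule.span_induction ?_ ?_ ?_ ?_ hf
  · rintro x ⟨k, l, hkl, rfl⟩
    refine ⟨X ^ k * C (X ^ l), fun k' l' h => ?_, fun z w => ?_⟩
    · rw [coeff_mul_C, coeff_X_pow]
      by_cases hk : k' = k
      · subst hk
        rw [if_pos rfl, one_mul, coeff_X_pow]
        rw [if_neg]
        intro hl; exact h (hl ▸ hkl)
      · rw [if_neg hk, zero_mul, Polynomial.coeff_zero]
    · simp [mul_comm]
  · exact ⟨0, by simp, by simp⟩
  · rintro x y _ _ ⟨F1, h1, e1⟩ ⟨F2, h2, e2⟩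
    exact ⟨F1 + F2, fun k l h => by simp [h1 k l h, h2 k l h],
      fun z w => by simp [e1 z w, e2 z w]⟩
  · rintro c x _ ⟨F, h1, e1⟩
    exact ⟨c • F, fun k l h => by simp [h1 k l h],
      fun z w => by simp [e1 z w]⟩

open Polynomial in
lemma prod_mem_polySpace (d m : ℕ) (A B : Polynomial ℂ)
    (h : ∀ k l : ℕ, A.coeff k ≠ 0 → B.coeff l ≠ 0 → BidIdx d m (k, l)) :
    (fun zw : ℂ × ℂ => A.eval zw.1 * B.eval zw.2) ∈ PolySpace d m := by
  have key : (fun zw : ℂ × ℂ => A.eval zw.1 * B.eval zw.2) =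
      ∑ k ∈ range (A.natDegree + 1), ∑ l ∈ range (B.natDegree + 1),
        (A.coeff k * B.coeff l) • (fun zw : ℂ × ℂ => zw.1 ^ k * zw.2 ^ l) := by
    funext zw
    simp only [Finset.sum_apply, Pi.smul_apply, smul_eq_mul]
    rw [eval_eq_sum_range, eval_eq_sum_range, Finset.sum_mul_sum]
    refine Finset.sum_congr rfl fun k _ => Finset.sum_congr rfl fun l _ => by ring
  rw [key]
  refine Submodule.sum_mem _ fun k _ => Submodule.sum_mem _ fun l _ => ?_
  by_cases hc : A.coeff k * B.coeff l = 0
  · rw [hc, zero_smul]; exact Submodule.zero_mem _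
  · refine Submodule.smul_mem _ _ (Submodule.subset_span ?_)
    exact ⟨k, l, h k l (fun h0 => hc (by rw [h0, zero_mul]))
      (fun h0 => hc (by rw [h0, mul_zero])), rfl⟩

open Polynomial in
lemma flipterm_mem (d m : ℕ) (s t : Finset ℕ) (u v cu cv : ℕ → ℂ)
    (h : ∀ k l : ℕ, k ≤ s.card → l ≤ t.card → BidIdx d m (k, l)) :
    (fun zw : ℂ × ℂ =>
      (∏ i ∈ s, (zw.1 - u i) / cu i) * (∏ j ∈ t, (zw.2 - v j) / cv j)) ∈ PolySpace d m := by
  set A : Polynomial ℂ := ∏ i ∈ s, (C (cu i)⁻¹ * (X - C (u i))) with hA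
  set B : Polynomial ℂ := ∏ j ∈ t, (C (cv j)⁻¹ * (X - C (v j))) with hB
  have degA : A.natDegree ≤ s.card := by
    refine (natDegree_prod_le _ _).trans ?_
    have h1 : ∀ i ∈ s, (C (cu i)⁻¹ * (X - C (u i))).natDegree ≤ 1 := fun i _ =>
      (natDegree_C_mul_le _ _).trans (natDegree_X_sub_C (u i)).le
    exact (Finset.sum_le_card_nsmul s _ 1 h1).trans (by simp)
  have degB : B.natDegree ≤ t.card := by
    refine (natDegree_prod_le _ _).trans ?_
    have h1 : ∀ j ∈ t, (C (cv j)⁻¹ * (X - C (v j))).natDegree ≤ 1 := fun j _ =>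
      (natDegree_C_mul_le _ _).trans (natDegree_X_sub_C (v j)).le
    exact (Finset.sum_le_card_nsmul t _ 1 h1).trans (by simp)
  have evA : ∀ z : ℂ, A.eval z = ∏ i ∈ s, (z - u i) / cu i := by
    intro z
    rw [hA, eval_prod]
    exact Finset.prod_congr rfl fun i _ => by
      rw [eval_mul, eval_C, eval_sub, eval_X, eval_C, div_eq_inv_mul]
  have evB : ∀ w : ℂ, B.eval w = ∏ j ∈ t, (w - v j) / cv j := by
    intro w
    rw [hB, eval_prod]
    exact Finset.prod_congr rfl fun j _ => by
      rw [eval_mul, eval_C, eval_sub, eval_X, eval_C, div_eq_inv_mul]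
  have := prod_mem_polySpace d m A B (fun k l hk hl => by
    refine h k l ?_ ?_
    · by_contra hc
      exact hk (coeff_eq_zero_of_natDegree_lt (by omega))
    · by_contra hc
      exact hl (coeff_eq_zero_of_natDegree_lt (by omega)))
  convert this using 2 with zw
  rw [evA, evB]

lemma prod_div_one (x : ℕ → ℂ) (hx : Function.Injective x) (p : ℕ) (s : Finset ℕ)
    (hp : p ∉ s) : ∏ i ∈ s, (x p - x i) / (x p - x i) = 1 :=
  Finset.prod_eq_one fun i hi =>
    div_self (sub_ne_zero.2 fun h => hp (by rw [hx h]; exact hi))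

lemma prod_div_zero (x : ℕ → ℂ) (c : ℕ → ℂ) (k : ℕ) (s : Finset ℕ) (hk : k ∈ s) :
    ∏ i ∈ s, (x k - x i) / c i = 0 :=
  Finset.prod_eq_zero hk (by simp)

/-- in the bidimensional intertwining setting, for a point
`(η_p, θ_q) ∈ Ω_N` with `p+q = d−1` and `0 ≤ p ≤ m−1`, the FLIP is given by the
three-term formula (all products normalized by `(η_p − η_i)`, `(θ_q − θ_j)`). -/
theorem statement12 (η θ : ℕ → ℂ)
    (hη : Function.Injective η) (hθ : Function.Injective θ)
    (N d m : ℕ) (hN : 1 ≤ N)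
    (hlow : d * (d + 1) / 2 < N) (hhigh : N ≤ (d + 1) * (d + 2) / 2)
    (hm : N = d * (d + 1) / 2 + 1 + m)
    (p q : ℕ) (hpq : p + q + 1 = d) (hp : p < m) :
    ∀ L : (ℂ × ℂ) → ℂ, IsFLIP η θ d m p q L →
      ∀ z w : ℂ,
        L (z, w) =
          (∏ i ∈ (range (p + 2)).erase p, (z - η i) / (η p - η i)) *
              (∏ j ∈ range q, (w - θ j) / (θ q - θ j))
            - (∏ i ∈ range p, (z - η i) / (η p - η i)) *
                (∏ j ∈ range q, (w - θ j) / (θ q - θ j))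
            + (∏ i ∈ range p, (z - η i) / (η p - η i)) *
                (∏ j ∈ (range (q + 2)).erase q, (w - θ j) / (θ q - θ j)) := by
  rintro L ⟨hLmem, hL1, hL0⟩ z w
  have hmd : m ≤ d := by
    obtain ⟨t, ht⟩ := Nat.even_mul_succ_self d
    have e : (d + 1) * (d + 2) = d * (d + 1) + 2 * (d + 1) := by ring
    omega
  set T1 : (ℂ × ℂ) → ℂ := fun zw =>
    (∏ i ∈ (range (p + 2)).erase p, (zw.1 - η i) / (η p - η i)) *
      (∏ j ∈ range q, (zw.2 - θ j) / (θ q - θ j)) with hT1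
  set T2 : (ℂ × ℂ) → ℂ := fun zw =>
    (∏ i ∈ range p, (zw.1 - η i) / (η p - η i)) *
      (∏ j ∈ range q, (zw.2 - θ j) / (θ q - θ j)) with hT2
  set T3 : (ℂ × ℂ) → ℂ := fun zw =>
    (∏ i ∈ range p, (zw.1 - η i) / (η p - η i)) *
      (∏ j ∈ (range (q + 2)).erase q, (zw.2 - θ j) / (θ q - θ j)) with hT3
  have cardE : ((range (p + 2)).erase p).card = p + 1 := by
    rw [card_erase_of_mem (mem_range.2 (by omega)), card_range]; omega
  have cardE' : ((range (q + 2)).erase q).card = q + 1 := by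
    rw [card_erase_of_mem (mem_range.2 (by omega)), card_range]; omega
  have mem1 : T1 ∈ PolySpace d m := by
    refine flipterm_mem d m _ _ _ _ _ _ fun k l hk hl => ?_
    rw [cardE] at hk; rw [card_range] at hl
    simp only [bidIdx_iff]; omega
  have mem2 : T2 ∈ PolySpace d m := by
    refine flipterm_mem d m _ _ _ _ _ _ fun k l hk hl => ?_
    rw [card_range] at hk hl
    simp only [bidIdx_iff]; omega
  have mem3 : T3 ∈ PolySpace d m := by
    refine flipterm_mem d m _ _ _ _ _ _ fun k l hk hl => ?_
    rw [card_range] at hk; rw [cardE'] at hl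
    simp only [bidIdx_iff]; omega
  have hD : (L - (T1 - T2 + T3)) ∈ PolySpace d m :=
    Submodule.sub_mem _ hLmem (Submodule.add_mem _ (Submodule.sub_mem _ mem1 mem2) mem3)
  obtain ⟨F, hFsupp, hFeval⟩ := exists_poly_of_mem d m _ hD
  -- values of the candidate at grid points
  have pnotinE : p ∉ (range (p + 2)).erase p := Finset.notMem_erase _ _
  have qnotinE : q ∉ (range (q + 2)).erase q := Finset.notMem_erase _ _
  have pnotin : p ∉ range p := by simp
  have qnotin : q ∉ range q := by simp
  have hFvan : ∀ k l : ℕ, BidIdx d m (k, l) →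
      (F.eval (Polynomial.C (η k))).eval (θ l) = 0 := by
    intro k l hkl
    rw [← hFeval]
    simp only [Pi.sub_apply, Pi.add_apply]
    by_cases hkl' : (k, l) = (p, q)
    · injection hkl' with h1 h2
      rw [h1, h2, hL1, hT1, hT2, hT3]
      simp only
      rw [prod_div_one η hη p _ pnotinE, prod_div_one θ hθ q _ qnotin,
        prod_div_one η hη p _ pnotin, prod_div_one θ hθ q _ qnotinE]
      ring
    · rw [hL0 k l hkl hkl', hT1, hT2, hT3]
      simp only
      have hS : k + l < d ∨ (k + l = d ∧ k ≤ m) := hkl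
      rcases Nat.lt_or_ge l q with hlq | hlq
      · -- l < q : both w-products vanish
        rw [prod_div_zero θ _ l _ (mem_range.2 hlq),
          prod_div_zero θ _ l _ (Finset.mem_erase.2 ⟨by omega, mem_range.2 (by omega)⟩)]
        ring
      · rcases lt_trichotomy k p with hkp | hkp | hkp
        · -- k < p : both z-products vanish
          rw [prod_div_zero η _ k _ (mem_range.2 hkp),
            prod_div_zero η _ k _ (Finset.mem_erase.2 ⟨by omega, mem_range.2 (by omega)⟩)]
          ring
        · -- k = p, l = q + 1
          have hlq' : l ≠ q := fun h => hkl' (by rw [hkp, h])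
          have hl : l = q + 1 := by
            rcases hS with h | ⟨h, _⟩ <;> omega
          rw [hkp, hl, prod_div_zero θ _ (q+1) _
              (Finset.mem_erase.2 ⟨by omega, mem_range.2 (by omega)⟩),
            prod_div_one η hη p _ pnotinE, prod_div_one η hη p _ pnotin]
          ring
        · -- k = p + 1, l = q
          have hk : k = p + 1 ∧ l = q := by
            rcases hS with h | ⟨h, _⟩ <;> omega
          rw [hk.1, hk.2, prod_div_zero η _ (p+1) _
              (Finset.mem_erase.2 ⟨by omega, mem_range.2 (by omega)⟩),
            prod_div_one θ hθ q _ qnotin, prod_div_one θ hθ q _ qnotinE]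
          ring
  have hF0 : F = 0 := vanish_zero d m hmd η θ hη hθ F hFsupp hFvan
  have hzw := hFeval z w
  rw [hF0] at hzw
  simp only [Polynomial.eval_zero, Pi.sub_apply, Pi.add_apply] at hzw
  have := sub_eq_zero.1 hzw
  rw [this, hT1, hT2, hT3]
end
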